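/- arXiv:0904.1696 — 5 statements merged into one kernel-verified Lean document; each statement's English description precedes it below -/
import Mathlib

section
/- Let G be a finite k-connected undirected graph with at least k+1 vertices. Then the entanglement of G is at least k and at most the cyclicity of G (the minimum size of a vertex cover of G). -/
open SimpleGraph

/-- Cops have a winning strategy in the entanglement game on `G` with `k` cops,
from the position where Thief stands on `v`, the cops occupy `C`, and it is
Cops' turn. Cops may skip, place a new cop on `v`, or move a placed cop to `v`;
then Thief must move along an edge to a cop-free vertex. Since this predicate is
inductively defined, it holds exactly when Cops can force the play to be finite. -/
inductive CopsWin {V : Type*} [DecidableEq V] (G : SimpleGraph V) (k : ℕ) :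
    V → Finset V → Prop
  | step {v : V} {C C' : Finset V}
      (hmove : C' = C ∨ C' = insert v C ∨ ∃ x ∈ C, C' = insert v (C.erase x))
      (hcard : C'.card ≤ k)
      (hnext : ∀ w, G.Adj v w → w ∉ C' → CopsWin G k w C') :
      CopsWin G k v C

/-- The entanglement of `G`: the least `k` such that `k` cops catch Thief from
any initial vertex chosen by Thief. -/
noncomputable def entanglement {V : Type*} [DecidableEq V] (G : SimpleGraph V) : ℕ :=
  sInf {k | ∀ v : V, CopsWin G k v ∅}

/-- `X` is a vertex cover of `G`. -/
def IsVertexCover {V : Type*} (G : SimpleGraph V) (X : Finset V) : Prop :=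
  ∀ ⦃v w : V⦄, G.Adj v w → v ∈ X ∨ w ∈ X

/-- The cyclicity of an undirected graph: the minimum size of a vertex cover
(equivalently, of a feedback vertex set of the associated symmetric digraph). -/
noncomputable def cyclicity {V : Type*} (G : SimpleGraph V) : ℕ :=
  sInf {n | ∃ X : Finset V, X.card = n ∧ _root_.IsVertexCover G X}

/-- `G` is `m`-connected in the sense of Menger: any two distinct vertices are
joined by `m` pairwise distinct, internally disjoint paths. -/
def MengerConnected {V : Type*} (m : ℕ) (G : SimpleGraph V) : Prop :=
  ∀ u v : V, u ≠ v → ∃ P : Fin m → G.Path u v, Function.Injective P ∧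
    ∀ i j, i ≠ j → ∀ x, x ∈ (P i).1.support → x ∈ (P j).1.support → x = u ∨ x = v

attribute [local instance] Classical.propDecidable

/-- With a vertex cover's worth of cops, Cops win from any position where the
cops currently sit inside the cover and Thief is not caught. -/
private lemma copsWin_of_cover {V : Type*} [DecidableEq V] (G : SimpleGraph V)
    (X : Finset V) (hX : _root_.IsVertexCover G X) :
    ∀ (m : ℕ) (v : V) (C : Finset V),
      2 * (X \ C).card + (if v ∈ X then 0 else 1) ≤ m → C ⊆ X → v ∉ C →
      CopsWin G X.card v C := by
  intro m
  induction m with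
  | zero =>
    intro v C hm hCX hvC
    by_cases hv : v ∈ X
    · simp only [hv, if_pos] at hm
      have hmem : v ∈ X \ C := Finset.mem_sdiff.2 ⟨hv, hvC⟩
      have := Finset.card_pos.2 ⟨v, hmem⟩
      omega
    · simp only [hv, if_neg, not_false_iff] at hm
      exfalso; omega
  | succ m ih =>
    intro v C hm hCX hvC
    by_cases hv : v ∈ X
    · refine CopsWin.step (C' := insert v C) (Or.inr (Or.inl rfl))
        (Finset.card_le_card (Finset.insert_subset hv hCX)) ?_
      intro w _ hw
      have hlt : (X \ insert v C).card < (X \ C).card := by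
        apply Finset.card_lt_card
        refine (Finset.ssubset_iff_of_subset
          (Finset.sdiff_subset_sdiff le_rfl (Finset.subset_insert _ _))).2 ?_
        exact ⟨v, Finset.mem_sdiff.2 ⟨hv, hvC⟩, by simp⟩
      apply ih
      · have hb : (if w ∈ X then 0 else 1) ≤ 1 := by split <;> omega
        simp only [hv, if_pos] at hm
        omega
      · exact Finset.insert_subset hv hCX
      · exact hw
    · refine CopsWin.step (Or.inl rfl) (Finset.card_le_card hCX) ?_
      intro w hadj hw
      have hwX : w ∈ X := (hX hadj).resolve_left hv
      apply ih
      · simp only [hv, if_neg, not_false_iff] at hm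
        simp only [hwX, if_pos]
        omega
      · exact hCX
      · exact hw

private lemma walk_length_one_eq {V : Type*} {G : SimpleGraph V} {v u : V}
    (p q : G.Walk v u) (hp : p.length = 1) (hq : q.length = 1) : p = q := by
  cases p with
  | nil => simp at hp
  | cons h p' =>
    cases p' with
    | nil =>
      cases q with
      | nil => simp at hq
      | cons h' q' =>
        cases q' with
        | nil => rfl
        | cons h'' q'' => simp [SimpleGraph.Walk.length_cons] at hq
    | cons h₂ p'' => simp [SimpleGraph.Walk.length_cons] at hp

/-- In a `k`-connected graph with more than `k` vertices, every vertex has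
degree at least `k`. -/
private lemma k_le_degree {V : Type*} [Fintype V] [DecidableEq V] (k : ℕ)
    (G : SimpleGraph V) (hconn : MengerConnected k G)
    (hcard : k + 1 ≤ Fintype.card V) (v : V) :
    k ≤ (G.neighborFinset v).card := by
  rcases Nat.eq_zero_or_pos k with rfl | hk
  · exact Nat.zero_le _
  obtain ⟨u, hu⟩ : ∃ u : V, u ≠ v := Fintype.exists_ne_of_one_lt_card (by omega) v
  obtain ⟨P, hPinj, hPdisj⟩ := hconn v u hu.symm
  have hdec : ∀ i : Fin k, ∃ (x : V) (h : G.Adj v x) (q : G.Walk x u),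
      (P i).1 = SimpleGraph.Walk.cons h q :=
    fun i => SimpleGraph.Walk.exists_eq_cons_of_ne hu.symm (P i).1
  choose f hadj q hq using hdec
  -- each `q i` is a path
  have hqpath : ∀ i, (q i).IsPath ∧ v ∉ (q i).support := by
    intro i
    have := (P i).2
    rw [hq i, SimpleGraph.Walk.cons_isPath_iff] at this
    exact this
  have hlen : ∀ i, f i = u → (P i).1.length = 1 := by
    intro i hfu
    have hnil : (q i).copy hfu rfl = SimpleGraph.Walk.nil :=
      (SimpleGraph.Walk.isPath_iff_eq_nil).1
        ((SimpleGraph.Walk.isPath_copy _ _ _).2 (hqpath i).1)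
    have hlq : (q i).length = 0 := by
      have := congrArg SimpleGraph.Walk.length hnil
      simpa using this
    rw [hq i]
    simp [SimpleGraph.Walk.length_cons, hlq]
  have hfin : Function.Injective f := by
    intro i j hfij
    by_contra hij
    have hxi : f i ∈ (P i).1.support := by
      rw [hq i, SimpleGraph.Walk.support_cons]
      exact List.mem_cons_of_mem _ (q i).start_mem_support
    have hxj : f i ∈ (P j).1.support := by
      rw [hq j, SimpleGraph.Walk.support_cons, hfij]
      exact List.mem_cons_of_mem _ (q j).start_mem_support
    have hor := hPdisj i j hij (f i) hxi hxj
    have hfv : f i ≠ v := fun h => (G.ne_of_adj (hadj i)) h.symm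
    have hfu : f i = u := hor.resolve_left hfv
    have h1 : (P i).1.length = 1 := hlen i hfu
    have h2 : (P j).1.length = 1 := hlen j (hfij ▸ hfu)
    have : (P i).1 = (P j).1 := walk_length_one_eq _ _ h1 h2
    exact hij (hPinj (Subtype.ext this))
  calc k = (Finset.univ : Finset (Fin k)).card := by simp
    _ ≤ (G.neighborFinset v).card := by
        apply Finset.card_le_card_of_injOn f
        · intro i _
          rw [Finset.mem_coe, SimpleGraph.mem_neighborFinset]
          exact hadj i
        · exact hfin.injOn

/-- If every vertex has degree at least `k`, then fewer than `k` cops never win. -/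
private lemma thief_escapes {V : Type*} [Fintype V] [DecidableEq V] (k : ℕ)
    (G : SimpleGraph V) (hdeg : ∀ v, k ≤ (G.neighborFinset v).card)
    {n : ℕ} (hn : n < k) (v : V) (C : Finset V) : ¬ CopsWin G n v C := by
  intro h
  induction h with
  | @step v C C' hmove hcard hnext ih =>
    have hne : ((G.neighborFinset v) \ C').Nonempty := by
      apply Finset.card_pos.1
      have h1 := hdeg v
      have h2 := Finset.le_card_sdiff C' (G.neighborFinset v)
      omega
    obtain ⟨w, hw⟩ := hne
    rw [Finset.mem_sdiff, SimpleGraph.mem_neighborFinset] at hw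
    exact ih w hw.1 hw.2

/-- if `G` is a `k`-connected graph with at least `k+1` vertices, then
`k ≤ Ent(G) ≤ Cycl(G)`. -/
theorem entanglement_between_connectivity_and_cyclicity
    {V : Type*} [Fintype V] [DecidableEq V] (k : ℕ) (G : SimpleGraph V)
    (hconn : MengerConnected k G) (hcard : k + 1 ≤ Fintype.card V) :
    k ≤ entanglement G ∧ entanglement G ≤ cyclicity G := by
  have huniv : _root_.IsVertexCover G (Finset.univ : Finset V) :=
    fun a b _ => Or.inl (Finset.mem_univ a)
  have hwin : ∀ (X : Finset V), _root_.IsVertexCover G X → ∀ v, CopsWin G X.card v ∅ := by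
    intro X hX v
    exact copsWin_of_cover G X hX _ v ∅ le_rfl (by simp) (by simp)
  have hSne : Fintype.card V ∈ {k | ∀ v : V, CopsWin G k v ∅} := by
    intro v
    have := hwin Finset.univ huniv v
    rwa [Finset.card_univ] at this
  constructor
  · apply le_csInf ⟨Fintype.card V, hSne⟩
    intro n hn
    by_contra hlt
    push_neg at hlt
    have hV : Nonempty V := by
      have : 0 < Fintype.card V := by omega
      exact Fintype.card_pos_iff.1 this
    obtain ⟨v⟩ := hV
    exact thief_escapes k G (k_le_degree k G hconn hcard) hlt v ∅ (hn v)
  · have hTne : ∃ n, n ∈ {n | ∃ X : Finset V, X.card = n ∧ _root_.IsVertexCover G X} :=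
      ⟨Fintype.card V, Finset.univ, Finset.card_univ, huniv⟩
    obtain ⟨X, hXc, hXcov⟩ := Nat.sInf_mem hTne
    apply Nat.sInf_le
    intro v
    rw [show cyclicity G = X.card from hXc.symm]
    exact hwin X hXcov v
end

section
/- Let B be a finite k'-connected graph and let G be obtained from B by adding h new vertices v₁,…,v_h, each joined by an edge to every vertex of B (and no edges among the new vertices). Then G is min(|V(B)|, k'+h)-connected. -/
open SimpleGraph

/-- The graph obtained from `B` by adding `h` new vertices, each joined by an edge
to every vertex of `B`, with no edges among the new vertices. -/
def joinGraph {β : Type*} (B : SimpleGraph β) (h : ℕ) : SimpleGraph (β ⊕ Fin h) where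
  Adj x y :=
    match x, y with
    | Sum.inl a, Sum.inl b => B.Adj a b
    | Sum.inl _, Sum.inr _ => True
    | Sum.inr _, Sum.inl _ => True
    | Sum.inr _, Sum.inr _ => False
  symm := ⟨by rintro (a | a) (b | b) hab <;> first | exact hab.symm | trivial⟩
  loopless := ⟨by rintro (a | a) hab <;> first | exact B.loopless.irrefl a hab | exact hab⟩

namespace JoinAux

section paths
variable {V : Type*} {G : SimpleGraph V}

def path1 {u v : V} (huv : G.Adj u v) : G.Path u v :=
  ⟨Walk.cons huv Walk.nil, by simp [Walk.isPath_def, huv.ne]⟩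

def path2 {u x v : V} (h1 : G.Adj u x) (h2 : G.Adj x v) (hu : u ≠ v) : G.Path u v :=
  ⟨Walk.cons h1 (Walk.cons h2 Walk.nil), by simp [Walk.isPath_def, h1.ne, h2.ne, hu, h1.ne']⟩

def path3 {u x y v : V} (h1 : G.Adj u x) (h2 : G.Adj x y) (h3 : G.Adj y v)
    (huy : u ≠ y) (huv : u ≠ v) (hxv : x ≠ v) : G.Path u v :=
  ⟨Walk.cons h1 (Walk.cons h2 (Walk.cons h3 Walk.nil)), by
    simp [Walk.isPath_def, h1.ne, h2.ne, h3.ne, huy, huv, hxv, h1.ne', h2.ne', h3.ne']⟩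

@[simp] lemma path1_support {u v : V} (huv : G.Adj u v) : (path1 huv).1.support = [u, v] := rfl
@[simp] lemma path2_support {u x v : V} (h1 : G.Adj u x) (h2 : G.Adj x v) (hu : u ≠ v) :
    (path2 h1 h2 hu).1.support = [u, x, v] := rfl
@[simp] lemma path3_support {u x y v : V} (h1 : G.Adj u x) (h2 : G.Adj x y) (h3 : G.Adj y v)
    (huy : u ≠ y) (huv : u ≠ v) (hxv : x ≠ v) :
    (path3 h1 h2 h3 huy huv hxv).1.support = [u, x, y, v] := rfl

lemma path_map_support {W : Type*} {G' : SimpleGraph W} {f : G →g G'}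
    (hf : Function.Injective f) {u v : V} (p : G.Path u v) :
    (p.map f hf).1.support = p.1.support.map f := by
  rw [show (p.map f hf).1 = p.1.map f from rfl, Walk.support_map]

end paths

section good
variable {V : Type*} {G : SimpleGraph V}

def Good (G : SimpleGraph V) {u v : V} {ι : Type*} (P : ι → G.Path u v) : Prop :=
  Function.Injective P ∧ ∀ i j, i ≠ j → ∀ x, x ∈ (P i).1.support → x ∈ (P j).1.support →
    x = u ∨ x = v

lemma good_comp {u v : V} {ι ι' : Type*} {P : ι → G.Path u v} (hP : Good G P)
    {e : ι' → ι} (he : Function.Injective e) : Good G (P ∘ e) :=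
  ⟨hP.1.comp he, fun i j hij x hx1 hx2 => hP.2 _ _ (fun hh => hij (he hh)) x hx1 hx2⟩

lemma good_sum {u v : V} {ι₁ ι₂ : Type*} {P1 : ι₁ → G.Path u v} {P2 : ι₂ → G.Path u v}
    (h1 : Good G P1) (h2 : Good G P2)
    (hcross : ∀ i j x, x ∈ (P1 i).1.support → x ∈ (P2 j).1.support → x = u ∨ x = v)
    (hne : ∀ i j, P1 i ≠ P2 j) : Good G (Sum.elim P1 P2) := by
  constructor
  · rintro (i | i) (j | j) hij
    · exact congrArg Sum.inl (h1.1 hij)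
    · exact absurd hij (hne i j)
    · exact absurd hij.symm (hne j i)
    · exact congrArg Sum.inr (h2.1 hij)
  · rintro (i | i) (j | j) hij x hx1 hx2
    · exact h1.2 i j (fun hh => hij (congrArg _ hh)) x hx1 hx2
    · exact hcross i j x hx1 hx2
    · exact (hcross j i x hx2 hx1)
    · exact h2.2 i j (fun hh => hij (congrArg _ hh)) x hx1 hx2

lemma good_single {u v : V} (p : G.Path u v) : Good G (fun _ : Fin 1 => p) :=
  ⟨fun i j _ => Subsingleton.elim i j, fun i j hij => absurd (Subsingleton.elim i j) hij⟩

lemma good_reverse {u v : V} {ι : Type*} {P : ι → G.Path u v} (hP : Good G P) :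
    Good G (fun i => (P i).reverse) := by
  constructor
  · intro i j hij
    apply hP.1
    have := congrArg Path.reverse hij
    simpa [Path.reverse, Subtype.ext_iff, Walk.reverse_reverse] using this
  · intro i j hij x hx1 hx2
    simp only [Path.reverse, Walk.support_reverse, List.mem_reverse] at hx1 hx2
    exact (hP.2 i j hij x hx1 hx2).symm

lemma good_path2 {u v : V} {ι : Type*} {f : ι → V} (hf : Function.Injective f)
    (huv : u ≠ v) (h1 : ∀ i, G.Adj u (f i)) (h2 : ∀ i, G.Adj (f i) v) :
    Good G (fun i => path2 (h1 i) (h2 i) huv) := by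
  constructor
  · intro i j hij
    have := congrArg (fun p => p.1.support) hij
    simp only [path2_support] at this
    exact hf (by simpa using this)
  · intro i j hij x hx1 hx2
    simp only [path2_support, List.mem_cons, List.not_mem_nil, or_false] at hx1 hx2
    rcases hx1 with rfl | rfl | rfl
    · exact Or.inl rfl
    · rcases hx2 with hh | hh | hh
      · exact Or.inl hh
      · exact absurd (hf hh) hij
      · exact Or.inr hh
    · exact Or.inr rfl

lemma good_path3 {u v : V} {ι : Type*} {f g : ι → V} (hf : Function.Injective f)
    (hg : Function.Injective g) (hfg : ∀ i j, f i ≠ g j)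
    (huv : u ≠ v)
    (h1 : ∀ i, G.Adj u (f i)) (h2 : ∀ i, G.Adj (f i) (g i)) (h3 : ∀ i, G.Adj (g i) v)
    (hug : ∀ i, u ≠ g i) (hfv : ∀ i, f i ≠ v) :
    Good G (fun i => path3 (h1 i) (h2 i) (h3 i) (hug i) huv (hfv i)) := by
  constructor
  · intro i j hij
    have := congrArg (fun p => p.1.support) hij
    simp only [path3_support, List.cons.injEq] at this
    exact hf this.2.1
  · intro i j hij x hx1 hx2
    simp only [path3_support, List.mem_cons, List.not_mem_nil, or_false] at hx1 hx2
    rcases hx1 with rfl | rfl | rfl | rfl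
    · exact Or.inl rfl
    · rcases hx2 with hh | hh | hh | hh
      · exact Or.inl hh
      · exact absurd (hf hh) hij
      · exact absurd hh (hfg i j)
      · exact Or.inr hh
    · rcases hx2 with hh | hh | hh | hh
      · exact Or.inl hh
      · exact absurd hh.symm (hfg j i)
      · exact absurd (hg hh) hij
      · exact Or.inr hh
    · exact Or.inr rfl

lemma good_map {W : Type*} {G' : SimpleGraph W} {f : G →g G'}
    (hf : Function.Injective f) {u v : V} {ι : Type*} {Q : ι → G.Path u v}
    (hQ : Good G Q) : Good G' (fun i => (Q i).map f hf) := by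
  constructor
  · exact fun i j hij => hQ.1 (SimpleGraph.Path.map_injective hf u v hij)
  · intro i j hij x hx1 hx2
    simp only [path_map_support, List.mem_map] at hx1 hx2
    obtain ⟨y, hy, rfl⟩ := hx1
    obtain ⟨y', hy', hyy⟩ := hx2
    rcases hQ.2 i j hij y hy (hf hyy ▸ hy') with rfl | rfl
    · exact Or.inl rfl
    · exact Or.inr rfl

end good

section emb

def skipEmb (h t : ℕ) (j : Fin h) (hth : t + 1 ≤ h) (x : Fin t) : Fin h :=
  if hxj : (x : ℕ) < (j : ℕ) then ⟨x, Nat.lt_trans hxj j.isLt⟩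
  else ⟨(x : ℕ) + 1, by have := x.isLt; omega⟩

lemma skipEmb_ne (h t : ℕ) (j : Fin h) (hth : t + 1 ≤ h) (x : Fin t) :
    skipEmb h t j hth x ≠ j := by
  simp only [skipEmb, Ne, Fin.ext_iff]
  split_ifs <;> simp <;> omega

lemma skipEmb_inj (h t : ℕ) (j : Fin h) (hth : t + 1 ≤ h) :
    Function.Injective (skipEmb h t j hth) := by
  intro x y hxy
  simp only [skipEmb] at hxy
  split_ifs at hxy <;> (apply Fin.ext <;> simp only [Fin.mk.injEq] at hxy <;> omega)

noncomputable def finsetEmb {α : Type*} (s : Finset α) {n : ℕ} (hs : s.card = n) (x : Fin n) : α :=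
  ((s.equivFinOfCardEq hs).symm x : α)

lemma finsetEmb_mem {α : Type*} (s : Finset α) {n : ℕ} (hs : s.card = n) (x : Fin n) :
    finsetEmb s hs x ∈ s := ((s.equivFinOfCardEq hs).symm x).2

lemma finsetEmb_inj {α : Type*} (s : Finset α) {n : ℕ} (hs : s.card = n) :
    Function.Injective (finsetEmb s hs) :=
  Subtype.val_injective.comp (s.equivFinOfCardEq hs).symm.injective

end emb

section walklemmas
variable {V : Type*} {G : SimpleGraph V}

lemma walk_len_one_eq {u v : V} (p q : G.Walk u v) (hp : p.length = 1) (hq : q.length = 1) :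
    p = q := by
  cases p with
  | nil => simp at hp
  | cons h p' =>
    cases p' with
    | cons h2 p'' => simp [Walk.length_cons] at hp
    | nil =>
      cases q with
      | nil => simp at hq
      | cons h2 q' =>
        cases q' with
        | cons _ _ => simp [Walk.length_cons] at hq
        | nil => rfl

lemma snd_internal {u v : V} (p : G.Walk u v) (hp : p.IsPath) (hl : 2 ≤ p.length) :
    p.getVert 1 ∈ p.support ∧ p.getVert 1 ≠ u ∧ p.getVert 1 ≠ v := by
  cases p with
  | nil => simp at hl
  | cons h p' =>
    cases p' with
    | nil => simp at hl
    | cons h2 p'' =>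
      rw [Walk.cons_isPath_iff] at hp
      obtain ⟨hp', hu⟩ := hp
      rw [Walk.cons_isPath_iff] at hp'
      obtain ⟨hp'', hx⟩ := hp'
      rw [Walk.support_cons] at hu
      refine ⟨?_, ?_, ?_⟩
      · simp [Walk.getVert_cons_succ, Walk.getVert_zero, Walk.support_cons]
      · simp only [Walk.getVert_cons_succ, Walk.getVert_zero]
        intro hcon
        exact hu (by rw [← hcon]; exact List.mem_cons_self)
      · simp only [Walk.getVert_cons_succ, Walk.getVert_zero]
        intro hcon
        exact hx (by rw [hcon]; exact Walk.end_mem_support _)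

end walklemmas

lemma exists_neighbors {β : Type*} [Fintype β] {k' : ℕ} {B : SimpleGraph β}
    (hB : MengerConnected k' B) {a b : β} (hab : a ≠ b) {r : ℕ} (hr : r ≤ k') :
    ∃ s : Finset β, s.card = r ∧ a ∉ s ∧ ∀ c ∈ s, B.Adj a c := by
  classical
  obtain ⟨P, hPinj, hPdisj⟩ := hB a b hab
  have hlen : ∀ i, 1 ≤ (P i).1.length := by
    intro i
    by_contra hl
    push_neg at hl
    exact hab (Walk.eq_of_length_eq_zero (p := (P i).1) (by omega))
  have hadj : ∀ i, B.Adj a ((P i).1.getVert 1) := by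
    intro i
    have := (P i).1.adj_getVert_succ (i := 0) (hlen i)
    simpa [Walk.getVert_zero] using this
  have hmem : ∀ i, (P i).1.getVert 1 ∈ (P i).1.support := fun i =>
    Walk.mem_support_iff_exists_getVert.2 ⟨1, rfl, hlen i⟩
  have hinj : Function.Injective fun i => (P i).1.getVert 1 := by
    intro i j hij
    have hij' : (P i).1.getVert 1 = (P j).1.getVert 1 := hij
    by_contra hne
    by_cases h2 : 2 ≤ (P i).1.length
    · obtain ⟨hm, hxu, hxv⟩ := snd_internal (P i).1 (P i).2 h2
      rcases hPdisj i j hne _ hm (by rw [hij']; exact hmem j) with hh | hh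
      · exact hxu hh
      · exact hxv hh
    · by_cases h2' : 2 ≤ (P j).1.length
      · obtain ⟨hm', hxu', hxv'⟩ := snd_internal (P j).1 (P j).2 h2'
        rcases hPdisj j i (Ne.symm hne) _ hm' (by rw [← hij']; exact hmem i) with hh | hh
        · exact hxu' hh
        · exact hxv' hh
      · have e1 : (P i).1.length = 1 := by have := hlen i; omega
        have e2 : (P j).1.length = 1 := by have := hlen j; omega
        exact hne (hPinj (Subtype.ext (walk_len_one_eq _ _ e1 e2)))
  set N : Finset β := Finset.univ.filter (fun c => B.Adj a c) with hN
  have hcard : k' ≤ N.card := by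
    have := Fintype.card_le_of_injective
      (fun i : Fin k' => (⟨(P i).1.getVert 1, by
        simp only [hN, Finset.mem_filter, Finset.mem_univ, true_and]; exact hadj i⟩ : N))
      (fun i j hij => hinj (Subtype.ext_iff.1 hij))
    simpa using this
  obtain ⟨s, hs_sub, hs_card⟩ := Finset.exists_subset_card_eq (le_trans hr hcard)
  refine ⟨s, hs_card, ?_, ?_⟩
  · intro ha
    have := hs_sub ha
    simp only [hN, Finset.mem_filter] at this
    exact B.loopless.irrefl a this.2
  · intro c hc
    have := hs_sub hc
    simp only [hN, Finset.mem_filter] at this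
    exact this.2

section cases
variable {β : Type*} [Fintype β] {B : SimpleGraph β}

lemma jadj_inl_inr {h : ℕ} (a : β) (i : Fin h) :
    (joinGraph B h).Adj (Sum.inl a) (Sum.inr i) := trivial
lemma jadj_inr_inl {h : ℕ} (i : Fin h) (a : β) :
    (joinGraph B h).Adj (Sum.inr i) (Sum.inl a) := trivial
lemma jadj_inl_inl {h : ℕ} {a b : β} (hab : B.Adj a b) :
    (joinGraph B h).Adj (Sum.inl a) (Sum.inl b) := hab

def inlHom {h : ℕ} : B →g joinGraph B h := ⟨Sum.inl, fun {x y} hxy => hxy⟩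

@[simp] lemma inlHom_coe {h : ℕ} : ⇑(inlHom (B := B) (h := h)) = Sum.inl := rfl

lemma case_rr {h m : ℕ} (hm1 : m ≤ Fintype.card β) {i j : Fin h} (hij : i ≠ j) :
    ∃ P : Fin m → (joinGraph B h).Path (Sum.inr i) (Sum.inr j), Good _ P := by
  have huv : (Sum.inr i : β ⊕ Fin h) ≠ Sum.inr j := fun hh => hij (Sum.inr_injective hh)
  have hg := good_path2 (G := joinGraph B h)
    (f := fun b : β => (Sum.inl b : β ⊕ Fin h)) Sum.inl_injective huv
    (fun b => jadj_inr_inl i b) (fun b => jadj_inl_inr b j)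
  have he : Function.Injective fun x : Fin m => (Fintype.equivFin β).symm (Fin.castLE hm1 x) :=
    fun x y hxy => Fin.castLE_injective hm1 ((Fintype.equivFin β).symm.injective hxy)
  exact ⟨_, good_comp hg he⟩

lemma case_ll {k' h m : ℕ} (hB : MengerConnected k' B) (hm2 : m ≤ k' + h)
    {a b : β} (hab : a ≠ b) :
    ∃ P : Fin m → (joinGraph B h).Path (Sum.inl a) (Sum.inl b), Good _ P := by
  obtain ⟨Q, hQinj, hQdisj⟩ := hB a b hab
  have huv : (Sum.inl a : β ⊕ Fin h) ≠ Sum.inl b := fun hh => hab (Sum.inl_injective hh)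
  have hQg : Good B Q := ⟨hQinj, hQdisj⟩
  let P1 : Fin k' → (joinGraph B h).Path (Sum.inl a) (Sum.inl b) :=
    fun s => (Q s).map inlHom Sum.inl_injective
  have h1 : Good (joinGraph B h) P1 := good_map Sum.inl_injective hQg
  have h2 := good_path2 (G := joinGraph B h)
    (f := fun s : Fin h => (Sum.inr s : β ⊕ Fin h)) Sum.inr_injective huv
    (fun s => jadj_inl_inr a s) (fun s => jadj_inr_inl s b)
  have hcross : ∀ s t x, x ∈ (P1 s).1.support →
      x ∈ ((fun s : Fin h => path2 (jadj_inl_inr (B := B) a s) (jadj_inr_inl (B := B) s b) huv) t).1.support →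
      x = Sum.inl a ∨ x = Sum.inl b := by
    intro s t x hx1 hx2
    rw [show (P1 s).1.support = (Q s).1.support.map Sum.inl from
      path_map_support Sum.inl_injective (Q s), List.mem_map] at hx1
    obtain ⟨y, hy, rfl⟩ := hx1
    simp only [path2_support, List.mem_cons, List.not_mem_nil, or_false] at hx2
    rcases hx2 with hh | hh | hh
    · exact Or.inl hh
    · exact absurd hh (by simp)
    · exact Or.inr hh
  have hne : ∀ s t, P1 s ≠ (fun s : Fin h => path2 (jadj_inl_inr (B := B) a s) (jadj_inr_inl (B := B) s b) huv) t := by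
    intro s t heq
    have := congrArg (fun p => p.1.support) heq
    simp only [path2_support] at this
    rw [show (P1 s).1.support = (Q s).1.support.map Sum.inl from
      path_map_support Sum.inl_injective (Q s)] at this
    have hmem : (Sum.inr t : β ⊕ Fin h) ∈ (Q s).1.support.map Sum.inl := by
      rw [this]; simp
    simp only [List.mem_map] at hmem
    obtain ⟨y, _, hy⟩ := hmem
    exact absurd hy (by simp)
  have hgood := good_sum h1 h2 hcross hne
  have hcard : m ≤ Fintype.card (Fin k' ⊕ Fin h) := by
    simp only [Fintype.card_sum, Fintype.card_fin]; omega
  have he : Function.Injective fun x : Fin m =>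
      (Fintype.equivFin (Fin k' ⊕ Fin h)).symm (Fin.castLE hcard x) :=
    fun x y hxy => Fin.castLE_injective hcard ((Fintype.equivFin _).symm.injective hxy)
  exact ⟨_, good_comp hgood he⟩

lemma case_lr {k' h m : ℕ} (hB : MengerConnected k' B) (hm1 : m ≤ Fintype.card β)
    (hm2 : m ≤ k' + h) (a : β) (j : Fin h) :
    ∃ P : Fin m → (joinGraph B h).Path (Sum.inl a) (Sum.inr j), Good _ P := by
  classical
  have hh1 : 1 ≤ h := j.pos
  set t := min (m - 1) (h - 1) with ht
  set r := m - 1 - t with hr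
  have huv : (Sum.inl a : β ⊕ Fin h) ≠ Sum.inr j := by simp
  have hrk : r ≤ k' := by omega
  have hC : ∃ s : Finset β, s.card = r ∧ a ∉ s ∧ ∀ c ∈ s, B.Adj a c := by
    rcases Nat.eq_zero_or_pos r with h0 | hpos
    · exact ⟨∅, by simp [h0], by simp, by simp⟩
    · have hcb : 1 < Fintype.card β := by omega
      obtain ⟨b, hb⟩ := Fintype.exists_ne_of_one_lt_card hcb a
      exact exists_neighbors hB hb.symm hrk
  obtain ⟨C, hCcard, haC, hCadj⟩ := hC
  have hD : ∃ s : Finset β, s ⊆ Finset.univ \ insert a C ∧ s.card = t := by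
    apply Finset.exists_subset_card_eq
    rw [Finset.card_sdiff_of_subset (Finset.subset_univ _), Finset.card_univ,
      Finset.card_insert_of_notMem haC, hCcard]
    omega
  obtain ⟨D, hDsub, hDcard⟩ := hD
  have hDa : ∀ x : Fin t, finsetEmb D hDcard x ≠ a := by
    intro x hx
    have := hDsub (finsetEmb_mem D hDcard x)
    rw [hx] at this
    simp at this
  have hDC : ∀ x : Fin t, finsetEmb D hDcard x ∉ C := by
    intro x hx
    have := hDsub (finsetEmb_mem D hDcard x)
    simp only [Finset.mem_sdiff, Finset.mem_univ, Finset.mem_insert, true_and] at this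
    exact this (Or.inr hx)
  have hth : t + 1 ≤ h := by omega
  have hg1 : Good (joinGraph B h) (fun _ : Fin 1 => path1 (jadj_inl_inr (B := B) a j)) :=
    good_single _
  have hg2 := good_path3 (G := joinGraph B h)
    (f := fun s : Fin t => (Sum.inr (skipEmb h t j hth s) : β ⊕ Fin h))
    (g := fun s : Fin t => (Sum.inl (finsetEmb D hDcard s) : β ⊕ Fin h))
    (Sum.inr_injective.comp (skipEmb_inj h t j hth))
    (Sum.inl_injective.comp (finsetEmb_inj D hDcard))
    (fun s s' => by simp)
    huv
    (fun s => jadj_inl_inr a _) (fun s => jadj_inr_inl _ _) (fun s => jadj_inl_inr _ j)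
    (fun s => by simp [Ne, (hDa s).symm])
    (fun s => by simp [skipEmb_ne h t j hth s])
  have hg3 := good_path2 (G := joinGraph B h)
    (f := fun s : Fin r => (Sum.inl (finsetEmb C hCcard s) : β ⊕ Fin h))
    (Sum.inl_injective.comp (finsetEmb_inj C hCcard))
    huv
    (fun s => jadj_inl_inl (hCadj _ (finsetEmb_mem C hCcard s)))
    (fun s => jadj_inl_inr _ j)
  have hg12 := good_sum hg1 hg2
    (by
      intro s s' x hx1 hx2
      simp only [path1_support, List.mem_cons, List.not_mem_nil, or_false] at hx1
      rcases hx1 with rfl | rfl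
      · exact Or.inl rfl
      · exact Or.inr rfl)
    (by
      intro s s' heq
      have := congrArg (fun p => p.1.support.length) heq
      simp only [path1_support, path3_support, List.length_cons] at this
      omega)
  have hg123 := good_sum hg12 hg3
    (by
      rintro (s | s) s' x hx1 hx2
      · simp only [Sum.elim_inl, path1_support, List.mem_cons, List.not_mem_nil,
          or_false] at hx1
        rcases hx1 with rfl | rfl
        · exact Or.inl rfl
        · exact Or.inr rfl
      · simp only [Sum.elim_inr, path3_support, path2_support, List.mem_cons,
          List.not_mem_nil, or_false] at hx1 hx2
        rcases hx1 with rfl | rfl | rfl | rfl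
        · exact Or.inl rfl
        · rcases hx2 with hh | hh | hh
          · exact absurd hh (by simp)
          · exact absurd hh (by simp)
          · exact absurd (skipEmb_ne h t j hth s (Sum.inr_injective hh)) (fun q => q)
        · rcases hx2 with hh | hh | hh
          · exact absurd (Sum.inl_injective hh) (hDa s)
          · exact absurd (hDC s) (fun q => q ((Sum.inl_injective hh) ▸ finsetEmb_mem C hCcard s'))
          · exact absurd hh (by simp)
        · exact Or.inr rfl)
    (by
      rintro (s | s) s' heq
      · have := congrArg (fun p => p.1.support.length) heq
        simp only [Sum.elim_inl, path1_support, path2_support, List.length_cons] at this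
        omega
      · have := congrArg (fun p => p.1.support.length) heq
        simp only [Sum.elim_inr, path3_support, path2_support, List.length_cons] at this
        omega)
  have hcard : m ≤ Fintype.card ((Fin 1 ⊕ Fin t) ⊕ Fin r) := by
    simp only [Fintype.card_sum, Fintype.card_fin]
    omega
  have he : Function.Injective fun x : Fin m =>
      (Fintype.equivFin ((Fin 1 ⊕ Fin t) ⊕ Fin r)).symm (Fin.castLE hcard x) :=
    fun x y hxy => Fin.castLE_injective hcard ((Fintype.equivFin _).symm.injective hxy)
  exact ⟨_, good_comp hg123 he⟩

end cases

end JoinAux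

/-- if `B` is `k'`-connected and `G` is obtained from `B` by adding `h`
new vertices each adjacent to all of `B` (and to no new vertex), then `G` is
`min(|V(B)|, k'+h)`-connected. -/
theorem joinGraph_connected {β : Type*} [Fintype β] (k' h : ℕ)
    (B : SimpleGraph β) (hB : MengerConnected k' B) :
    MengerConnected (min (Fintype.card β) (k' + h)) (joinGraph B h) := by
  intro u v huv
  have hm1 : min (Fintype.card β) (k' + h) ≤ Fintype.card β := min_le_left _ _
  have hm2 : min (Fintype.card β) (k' + h) ≤ k' + h := min_le_right _ _
  obtain (a | i) := u <;> obtain (b | j) := v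
  · have hab : a ≠ b := fun e => huv (congrArg Sum.inl e)
    obtain ⟨P, hP⟩ := JoinAux.case_ll hB hm2 hab
    exact ⟨P, hP.1, hP.2⟩
  · obtain ⟨P, hP⟩ := JoinAux.case_lr hB hm1 hm2 a j
    exact ⟨P, hP.1, hP.2⟩
  · obtain ⟨P, hP⟩ := JoinAux.case_lr hB hm1 hm2 b i
    have hg := JoinAux.good_reverse hP
    exact ⟨fun s => (P s).reverse, hg.1, hg.2⟩
  · have hij : i ≠ j := fun e => huv (congrArg Sum.inr e)
    obtain ⟨P, hP⟩ := JoinAux.case_rr hm1 hij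
    exact ⟨P, hP.1, hP.2⟩
end

section
/- Let k, h ≥ 1 and let G = ϑ_{B_k}^{B,h} be a k-molecule: G has vertex set B_k ∪ {v₁,…,v_h} where |B_k| = k, edge set B ∪ {v_i b : 1 ≤ i ≤ h, b ∈ B_k} with B ⊆ B_k × B_k a set of edges on B_k, and h ≥ k − k' where k' is the connectivity of the subgraph induced by B_k. Then the connectivity of G equals exactly k. -/
open SimpleGraph

/-- The connectivity of a graph: the largest `m` for which it is `m`-connected.
(With this definition the connectivity of the `k`-clique is `k-1`, as in the
paper's convention.) -/
noncomputable def connectivity {V : Type*} (G : SimpleGraph V) : ℕ :=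
  sSup {m | MengerConnected m G}

/-- The `k`-molecule `ϑ_{B_k}^{Bs,h}`: its vertices are a base `B_k` of `k`
vertices (the `Sum.inl` vertices) carrying the internal edge set `Bs`, together
with `h` further vertices `v₁, …, v_h` (the `Sum.inr` vertices), each adjacent
to every base vertex and to no other non-base vertex. -/
def molecule (k h : ℕ) (Bs : SimpleGraph (Fin k)) : SimpleGraph (Fin k ⊕ Fin h) where
  Adj x y :=
    match x, y with
    | Sum.inl a, Sum.inl b => Bs.Adj a b
    | Sum.inl _, Sum.inr _ => True
    | Sum.inr _, Sum.inl _ => True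
    | Sum.inr _, Sum.inr _ => False
  symm := ⟨by rintro (a | a) (b | b) hab <;> first | exact hab.symm | trivial⟩
  loopless := ⟨by rintro (a | a) hab <;> first | exact Bs.loopless.irrefl a hab | exact Bs.irrefl hab | exact hab⟩

/- ======================= auxiliary lemmas ======================= -/

section Aux
variable {V : Type*} {G : SimpleGraph V}

lemma menger_zero (G : SimpleGraph V) : MengerConnected 0 G := by
  intro u v _
  exact ⟨Fin.elim0, fun i => i.elim0, fun i => i.elim0⟩

lemma menger_mono {m n : ℕ} (hmn : m ≤ n) (hn : MengerConnected n G) :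
    MengerConnected m G := by
  intro u v huv
  obtain ⟨P, hPinj, hPdisj⟩ := hn u v huv
  refine ⟨P ∘ Fin.castLE hmn, hPinj.comp (Fin.castLE_injective hmn), ?_⟩
  intro i j hij x hxi hxj
  exact hPdisj _ _ (fun hc => hij (Fin.castLE_injective hmn hc)) x hxi hxj

lemma walk_decomp {u v : V} (huv : u ≠ v) (p : G.Walk u v) :
    ∃ (x : V) (hx : G.Adj u x) (q : G.Walk x v), p = Walk.cons hx q := by
  cases p with
  | nil => exact absurd rfl huv
  | cons hx q => exact ⟨_, hx, q, rfl⟩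

lemma snd_eq_end {u v x : V} (hxv : x = v) (hx : G.Adj u x) (q : G.Walk x v)
    (hpath : (Walk.cons hx q).IsPath) :
    Walk.cons hx q = Walk.cons (hxv ▸ hx) Walk.nil := by
  subst hxv
  have hq : q = Walk.nil := Walk.isPath_iff_eq_nil.1 hpath.of_cons
  subst hq; rfl

/-- the "second vertex" injection for a Menger family -/
lemma snd_injection {u v : V} (huv : u ≠ v) {m : ℕ}
    (P : Fin m → G.Path u v) (hinj : Function.Injective P)
    (hdisj : ∀ i j, i ≠ j → ∀ x, x ∈ (P i).1.support → x ∈ (P j).1.support → x = u ∨ x = v) :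
    ∃ f : Fin m → V, Function.Injective f ∧
      ∀ i, G.Adj u (f i) ∧ f i ≠ u ∧ f i ∈ (P i).1.support := by
  choose x hx q hq using fun i => walk_decomp huv (P i).1
  have hmem : ∀ i, x i ∈ (P i).1.support := by
    intro i; rw [hq i]; simp [Walk.support_cons]
  have hne : ∀ i, x i ≠ u := by
    intro i hxu
    have hp := (P i).2
    rw [hq i, Walk.cons_isPath_iff] at hp
    exact hp.2 (hxu ▸ (q i).start_mem_support)
  refine ⟨x, ?_, fun i => ⟨hx i, hne i, hmem i⟩⟩
  intro i j hxij
  by_contra hij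
  rcases hdisj i j hij (x i) (hmem i) (hxij ▸ hmem j) with h | h
  · exact hne i h
  · have hpi := (P i).2; have hpj := (P j).2
    rw [hq i] at hpi; rw [hq j] at hpj
    have ei := snd_eq_end h (hx i) (q i) hpi
    have ej := snd_eq_end (hxij ▸ h) (hx j) (q j) hpj
    apply hij; apply hinj; apply Subtype.ext
    rw [hq i, hq j, ei, ej]

lemma menger_card_bound [Fintype V] [DecidableEq V] {u v : V} (huv : u ≠ v) {m : ℕ}
    (hm : MengerConnected m G) : m ≤ Fintype.card V - 1 := by
  obtain ⟨P, hinj, hdisj⟩ := hm u v huv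
  obtain ⟨f, hfinj, hf⟩ := snd_injection huv P hinj hdisj
  have : m ≤ Fintype.card {x : V // x ≠ u} := by
    have := Fintype.card_le_of_injective (fun i => (⟨f i, (hf i).2.1⟩ : {x : V // x ≠ u}))
      (fun i j hij => hfinj (congrArg Subtype.val hij))
    simpa using this
  calc m ≤ _ := this
    _ = Fintype.card V - 1 := by
      rw [Fintype.card_subtype_compl]
      simp [Fintype.card_subtype_eq]

lemma menger_degree_bound [Fintype V] [DecidableEq V] {a b : V} (hab : a ≠ b) {m : ℕ}
    (hm : MengerConnected m G) [DecidableRel G.Adj] : m ≤ G.degree a := by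
  obtain ⟨P, hinj, hdisj⟩ := hm a b hab
  obtain ⟨f, hfinj, hf⟩ := snd_injection hab P hinj hdisj
  rw [← SimpleGraph.card_neighborSet_eq_degree]
  simpa only [Fintype.card_fin] using Fintype.card_le_of_injective
    (fun i => (⟨f i, (hf i).1⟩ : G.neighborSet a))
    (fun i j hij => hfinj (congrArg Subtype.val hij))

def path2 {u w v : V} (h1 : G.Adj u w) (h2 : G.Adj w v) (huv : u ≠ v) : G.Path u v :=
  ⟨Walk.cons h1 (Walk.cons h2 Walk.nil), by
    simp [Walk.isPath_def, h1.ne, h2.ne, huv]⟩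

lemma path2_support {u w v : V} (h1 : G.Adj u w) (h2 : G.Adj w v) (huv : u ≠ v) :
    (path2 h1 h2 huv).1.support = [u, w, v] := rfl

def path3 {u w z v : V} (h1 : G.Adj u w) (h2 : G.Adj w z) (h3 : G.Adj z v)
    (huz : u ≠ z) (huv : u ≠ v) (hwv : w ≠ v) : G.Path u v :=
  ⟨Walk.cons h1 (Walk.cons h2 (Walk.cons h3 Walk.nil)), by
    simp [Walk.isPath_def, h1.ne, h2.ne, h3.ne, huz, huv, hwv]⟩

lemma path3_support {u w z v : V} (h1 : G.Adj u w) (h2 : G.Adj w z) (h3 : G.Adj z v)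
    (huz : u ≠ z) (huv : u ≠ v) (hwv : w ≠ v) :
    (path3 h1 h2 h3 huz huv hwv).1.support = [u, w, z, v] := rfl

lemma singleton_support {u v : V} (h : G.Adj u v) :
    (SimpleGraph.Path.singleton h).1.support = [u, v] := rfl

end Aux

section Molecule

variable {k h : ℕ} {Bs : SimpleGraph (Fin k)}

lemma mol_adj_lr (a : Fin k) (i : Fin h) : (molecule k h Bs).Adj (Sum.inl a) (Sum.inr i) :=
  trivial

lemma mol_adj_rl (a : Fin k) (i : Fin h) : (molecule k h Bs).Adj (Sum.inr i) (Sum.inl a) :=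
  trivial

lemma mol_adj_ll {a b : Fin k} : (molecule k h Bs).Adj (Sum.inl a) (Sum.inl b) ↔ Bs.Adj a b :=
  Iff.rfl

/-- Case C: both ends are extra vertices. -/
lemma mengerC (hk : 1 ≤ k) (i i' : Fin h) (hii : i ≠ i') :
    ∃ P : Fin k → (molecule k h Bs).Path (Sum.inr i) (Sum.inr i'),
      Function.Injective P ∧
      ∀ a b, a ≠ b → ∀ x, x ∈ (P a).1.support → x ∈ (P b).1.support →
        x = Sum.inr i ∨ x = Sum.inr i' := by
  refine ⟨fun b => path2 (mol_adj_rl b i) (mol_adj_lr b i')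
    (fun hc => hii (Sum.inr.inj hc)), ?_, ?_⟩
  · intro a b hab
    have := congrArg (fun p : (molecule k h Bs).Path _ _ => p.1.support) hab
    simp only [path2_support, List.cons.injEq] at this
    exact Sum.inl.inj this.2.1
  · intro a b hab x hxa hxb
    rw [path2_support] at hxa hxb
    simp only [List.mem_cons, List.not_mem_nil, or_false] at hxa hxb
    rcases hxa with rfl | rfl | rfl
    · exact Or.inl rfl
    · rcases hxb with hc | hc | hc
      · exact absurd hc.symm (by simp)
      · exact absurd (Sum.inl.inj hc) hab
      · exact absurd hc (by simp)
    · exact Or.inr rfl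

end Molecule

section CaseB
variable {k h : ℕ} {Bs : SimpleGraph (Fin k)}

open Classical in
/-- the path family for case B -/
noncomputable def pathB (a : Fin k) (i : Fin h)
    (emb : {b : Fin k // b ≠ a ∧ ¬ Bs.Adj a b} → {j : Fin h // j ≠ i}) (b : Fin k) :
    (molecule k h Bs).Path (Sum.inl a) (Sum.inr i) :=
  if hba : b = a then SimpleGraph.Path.singleton (mol_adj_lr a i)
  else if hN : Bs.Adj a b then
    path2 (mol_adj_ll.2 hN) (mol_adj_lr b i) (by simp)
  else
    path3 (mol_adj_lr a (emb ⟨b, hba, hN⟩).1) (mol_adj_rl b _) (mol_adj_lr b i)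
      (by simp [Ne.symm hba]) (by simp) (by simp [(emb ⟨b, hba, hN⟩).2])

lemma pathB_memL (a : Fin k) (i : Fin h)
    (emb : {b : Fin k // b ≠ a ∧ ¬ Bs.Adj a b} → {j : Fin h // j ≠ i}) (c b : Fin k) :
    Sum.inl c ∈ (pathB a i emb b).1.support ↔ (c = a ∨ c = b) := by
  unfold pathB
  split_ifs with hba hN
  · subst hba; rw [singleton_support]; simp
  · rw [path2_support]; simp
  · rw [path3_support]; simp

lemma pathB_memR (a : Fin k) (i : Fin h)
    (emb : {b : Fin k // b ≠ a ∧ ¬ Bs.Adj a b} → {j : Fin h // j ≠ i}) (j : Fin h) (b : Fin k) :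
    Sum.inr j ∈ (pathB a i emb b).1.support →
      j = i ∨ ∃ (h1 : b ≠ a) (h2 : ¬ Bs.Adj a b), j = (emb ⟨b, h1, h2⟩).1 := by
  unfold pathB
  split_ifs with hba hN
  · rw [singleton_support]; simp; tauto
  · rw [path2_support]; simp; tauto
  · rw [path3_support]; simp; tauto

lemma mengerB (a : Fin k) (i : Fin h)
    (emb : {b : Fin k // b ≠ a ∧ ¬ Bs.Adj a b} ↪ {j : Fin h // j ≠ i}) :
    ∃ P : Fin k → (molecule k h Bs).Path (Sum.inl a) (Sum.inr i),
      Function.Injective P ∧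
      ∀ b b', b ≠ b' → ∀ x, x ∈ (P b).1.support → x ∈ (P b').1.support →
        x = Sum.inl a ∨ x = Sum.inr i := by
  refine ⟨pathB a i emb, ?_, ?_⟩
  · intro b b' hbb
    have h1 : Sum.inl b ∈ (pathB a i (emb : _ → _) b).1.support :=
      (pathB_memL a i emb b b).2 (Or.inr rfl)
    have h2 : Sum.inl b' ∈ (pathB a i (emb : _ → _) b').1.support :=
      (pathB_memL a i emb b' b').2 (Or.inr rfl)
    rw [hbb] at h1
    rw [← hbb] at h2
    rcases (pathB_memL a i emb b b').1 h1 with hba | hbb'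
    · rcases (pathB_memL a i emb b' b).1 h2 with hb'a | hb'b
      · rw [hba, hb'a]
      · exact hb'b.symm
    · exact hbb'
  · intro b b' hbb x hxb hxb'
    match x with
    | Sum.inl c =>
      rcases (pathB_memL a i emb c b).1 hxb with rfl | rfl
      · exact Or.inl rfl
      · rcases (pathB_memL a i emb c b').1 hxb' with rfl | rfl
        · exact Or.inl rfl
        · exact absurd rfl hbb
    | Sum.inr j =>
      rcases pathB_memR a i emb j b hxb with rfl | ⟨hb1, hb2, rfl⟩
      · exact Or.inr rfl
      · rcases pathB_memR a i emb _ b' hxb' with hji | ⟨hb1', hb2', hj'⟩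
        · exact Or.inr (by rw [hji])
        · exfalso
          apply hbb
          have : (⟨b, hb1, hb2⟩ : {b : Fin k // b ≠ a ∧ ¬ Bs.Adj a b}) = ⟨b', hb1', hb2'⟩ :=
            emb.injective (Subtype.ext hj')
          exact congrArg Subtype.val this

end CaseB

section CaseA
variable {k h : ℕ} {Bs : SimpleGraph (Fin k)}

abbrev inlHom : Bs →g (molecule k h Bs) :=
  ⟨Sum.inl, fun {x y} hxy => hxy⟩

lemma mengerA (a a' : Fin k) (haa : a ≠ a') (m1 : ℕ) (hm1k : m1 ≤ k) (hm1h : k - m1 ≤ h)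
    (hQ : MengerConnected m1 Bs) :
    ∃ P : Fin k → (molecule k h Bs).Path (Sum.inl a) (Sum.inl a'),
      Function.Injective P ∧
      ∀ i j, i ≠ j → ∀ x, x ∈ (P i).1.support → x ∈ (P j).1.support →
        x = Sum.inl a ∨ x = Sum.inl a' := by
  obtain ⟨Q, hQinj, hQdisj⟩ := hQ a a' haa
  have hinl : Function.Injective (inlHom (Bs := Bs) (k := k) (h := h)) :=
    fun x y hxy => Sum.inl.inj hxy
  refine ⟨fun i =>
    if hi : i.1 < m1 then (Q ⟨i.1, hi⟩).map inlHom hinl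
    else path2 (mol_adj_lr a ⟨i.1 - m1, by omega⟩) (mol_adj_rl a' ⟨i.1 - m1, by omega⟩)
      (by simp [haa]), ?_, ?_⟩
  · intro i j hij
    simp only at hij
    split_ifs at hij with hi hj hj
    · -- both base
    
      have := SimpleGraph.Walk.map_injective_of_injective hinl _ _
        (congrArg Subtype.val hij)
      have h2 := hQinj (Subtype.ext this)
      simp only [Fin.mk.injEq] at h2
      exact Fin.ext h2
    · -- base vs extra : contradiction
      exfalso
      have hmem : Sum.inr (⟨j.1 - m1, by omega⟩ : Fin h) ∈
          ((Q ⟨i.1, hi⟩).map inlHom hinl).1.support := by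
        rw [hij, path2_support]; simp
      rw [SimpleGraph.Path.map_coe, SimpleGraph.Walk.support_map] at hmem
      simp [inlHom] at hmem
    · exfalso
      have hmem : Sum.inr (⟨i.1 - m1, by omega⟩ : Fin h) ∈
          ((Q ⟨j.1, hj⟩).map inlHom hinl).1.support := by
        rw [← hij, path2_support]; simp
      rw [SimpleGraph.Path.map_coe, SimpleGraph.Walk.support_map] at hmem
      simp [inlHom] at hmem
    · -- both extra
      have := congrArg (fun p : (molecule k h Bs).Path _ _ => p.1.support) hij
      simp only [path2_support, List.cons.injEq] at this
      have : i.1 - m1 = j.1 - m1 := congrArg Fin.val (Sum.inr.inj this.2.1)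
      exact Fin.ext (by omega)
  · intro i j hij x hxi hxj
    simp only at hxi hxj
    split_ifs at hxi with hi <;> split_ifs at hxj with hj
    · -- both base
      rw [SimpleGraph.Path.map_coe, SimpleGraph.Walk.support_map] at hxi hxj
      obtain ⟨y, hy, rfl⟩ := List.mem_map.1 hxi
      obtain ⟨z, hz, hzy⟩ := List.mem_map.1 hxj
      have hij' : (⟨i.1, hi⟩ : Fin m1) ≠ ⟨j.1, hj⟩ := by
        intro hc
        simp only [Fin.mk.injEq] at hc
        exact hij (Fin.ext hc)
      have : z = y := Sum.inl.inj hzy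
      subst this
      rcases hQdisj _ _ hij' z hy hz with rfl | rfl
      · exact Or.inl rfl
      · exact Or.inr rfl
    · -- base vs extra
      rw [path2_support] at hxj
      rw [SimpleGraph.Path.map_coe, SimpleGraph.Walk.support_map] at hxi
      obtain ⟨y, hy, rfl⟩ := List.mem_map.1 hxi
      simp only [List.mem_cons, List.not_mem_nil, or_false] at hxj
      rcases hxj with hc | hc | hc
      · exact Or.inl hc
      · exact absurd hc (by simp [inlHom])
      · exact Or.inr hc
    · -- extra vs base
      rw [path2_support] at hxi
      rw [SimpleGraph.Path.map_coe, SimpleGraph.Walk.support_map] at hxj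
      simp only [List.mem_cons, List.not_mem_nil, or_false] at hxi
      rcases hxi with rfl | rfl | rfl
      · exact Or.inl rfl
      · obtain ⟨y, hy, hc⟩ := List.mem_map.1 hxj
        exact absurd hc (by simp [inlHom])
      · exact Or.inr rfl
    · -- both extra
      rw [path2_support] at hxi hxj
      simp only [List.mem_cons, List.not_mem_nil, or_false] at hxi hxj
      rcases hxi with rfl | rfl | rfl
      · exact Or.inl rfl
      · rcases hxj with hc | hc | hc
        · exact absurd hc (by simp)
        · exfalso
          have : i.1 - m1 = j.1 - m1 := congrArg Fin.val (Sum.inr.inj hc)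
          exact hij (Fin.ext (by omega))
        · exact absurd hc (by simp)
      · exact Or.inr rfl

end CaseA

section Assembly
variable {k h : ℕ} {Bs : SimpleGraph (Fin k)}

/-- reversing a Menger family -/
lemma menger_family_reverse {V : Type*} {G : SimpleGraph V} {u v : V} {m : ℕ}
    (P : Fin m → G.Path u v) (hinj : Function.Injective P)
    (hdisj : ∀ i j, i ≠ j → ∀ x, x ∈ (P i).1.support → x ∈ (P j).1.support → x = u ∨ x = v) :
    ∃ P' : Fin m → G.Path v u, Function.Injective P' ∧
      ∀ i j, i ≠ j → ∀ x, x ∈ (P' i).1.support → x ∈ (P' j).1.support → x = v ∨ x = u := by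
  refine ⟨fun i => (P i).reverse, ?_, ?_⟩
  · intro i j hij
    apply hinj
    have := congrArg SimpleGraph.Path.reverse hij
    simpa [SimpleGraph.Path.reverse] using this
  · intro i j hij x hxi hxj
    simp only [SimpleGraph.Path.reverse, SimpleGraph.Walk.support_reverse,
      List.mem_reverse] at hxi hxj
    exact (hdisj i j hij x hxi hxj).symm

/-- upper bound: the molecule is at most `k`-connected -/
lemma mol_upper (hk : 1 ≤ k) (hh : 1 ≤ h) {m : ℕ}
    (hm : MengerConnected m (molecule k h Bs)) : m ≤ k := by
  set u : Fin k ⊕ Fin h := Sum.inr ⟨0, hh⟩ with hu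
  set v : Fin k ⊕ Fin h := Sum.inl ⟨0, hk⟩ with hv
  have huv : u ≠ v := by simp [hu, hv]
  obtain ⟨P, hinj, hdisj⟩ := hm u v huv
  obtain ⟨f, hfinj, hf⟩ := snd_injection huv P hinj hdisj
  have hex : ∀ i, ∃ b : Fin k, f i = Sum.inl b := by
    intro i
    rcases hfi : f i with b | j
    · exact ⟨b, rfl⟩
    · exact absurd (hfi ▸ (hf i).1) (by intro hc; exact hc)
  choose g hg using hex
  have hginj : Function.Injective g := by
    intro i j hij
    apply hfinj
    rw [hg i, hg j, hij]
  simpa using Fintype.card_le_of_injective g hginj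

theorem molecule_connectivity' (hk : 1 ≤ k) (hh : 1 ≤ h)
    (Bs : SimpleGraph (Fin k)) (hcond : k - connectivity Bs ≤ h) :
    connectivity (molecule k h Bs) = k := by
  classical
  -- the base graph is `connectivity Bs`-connected, provided `2 ≤ k`
  have hBsmem : 2 ≤ k → MengerConnected (connectivity Bs) Bs := by
    intro hk2
    have hbdd : BddAbove {m | MengerConnected m Bs} := by
      refine ⟨k - 1, fun m hm => ?_⟩
      have h01 : (⟨0, by omega⟩ : Fin k) ≠ ⟨1, by omega⟩ := by simp
      simpa using menger_card_bound h01 hm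
    exact Nat.sSup_mem ⟨0, menger_zero _⟩ hbdd
  -- degree bound in the base graph
  have hdeg : 2 ≤ k → ∀ a : Fin k, connectivity Bs ≤ Bs.degree a := by
    intro hk2 a
    by_cases ha : a = ⟨0, by omega⟩
    · exact menger_degree_bound (b := ⟨1, by omega⟩)
        (by simp [ha, Fin.ext_iff]) (hBsmem hk2)
    · exact menger_degree_bound (b := ⟨0, by omega⟩) ha (hBsmem hk2)
  -- the embedding needed for case B
  have hemb : ∀ (a : Fin k) (i : Fin h),
      Nonempty ({b : Fin k // b ≠ a ∧ ¬ Bs.Adj a b} ↪ {j : Fin h // j ≠ i}) := by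
    intro a i
    apply Function.Embedding.nonempty_of_card_le
    have hcard1 : Fintype.card {b : Fin k // b ≠ a ∧ ¬ Bs.Adj a b} =
        k - Fintype.card {b : Fin k // b = a ∨ Bs.Adj a b} := by
      have e1 : Fintype.card {b : Fin k // b ≠ a ∧ ¬ Bs.Adj a b} =
          Fintype.card {b : Fin k // ¬ (b = a ∨ Bs.Adj a b)} :=
        Fintype.card_congr (Equiv.subtypeEquivRight (fun b => by tauto))
      rw [e1, Fintype.card_subtype_compl, Fintype.card_fin]
    have hcard2 : Fintype.card {b : Fin k // b = a ∨ Bs.Adj a b} = 1 + Bs.degree a := by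
      rw [Fintype.card_subtype_or_disjoint _ _ (by
        simp only [Pi.disjoint_iff]
        intro b
        by_cases hb : b = a
        · subst hb; simp [Bs.irrefl]
        · simp [hb])]
      have e2 : Fintype.card {x : Fin k // Bs.Adj a x} = Bs.degree a := by
        rw [← SimpleGraph.card_neighborSet_eq_degree]
        exact Fintype.card_congr (Equiv.subtypeEquivRight (fun x => Iff.rfl))
      rw [Fintype.card_subtype_eq, e2]
    have hcard3 : Fintype.card {j : Fin h // j ≠ i} = h - 1 := by
      have e3 : Fintype.card {j : Fin h // j ≠ i} =
          Fintype.card {j : Fin h // ¬ (j = i)} :=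
        Fintype.card_congr (Equiv.subtypeEquivRight (fun j => Iff.rfl))
      rw [e3, Fintype.card_subtype_compl, Fintype.card_fin, Fintype.card_subtype_eq]
    rw [hcard1, hcard2, hcard3]
    by_cases hk2 : 2 ≤ k
    · have := hdeg hk2 a
      omega
    · have hk1 : k = 1 := by omega
      omega
  -- `k`-connectedness of the molecule
  have hmem : MengerConnected k (molecule k h Bs) := by
    rintro (a | i) (a' | i') huv
    · -- both base vertices
      have haa : a ≠ a' := fun hc => huv (congrArg Sum.inl hc)
      have hk2 : 2 ≤ k := by
        by_contra hlt
        push_neg at hlt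
        have hk1 : k = 1 := by omega
        subst hk1
        exact haa (Subsingleton.elim a a')
      exact mengerA a a' haa (min (connectivity Bs) k) (min_le_right _ _)
        (by omega) (menger_mono (min_le_left _ _) (hBsmem hk2))
    · -- base to extra
      obtain ⟨emb⟩ := hemb a i'
      exact mengerB a i' emb
    · -- extra to base
      obtain ⟨emb⟩ := hemb a' i
      obtain ⟨P, h1, h2⟩ := mengerB a' i emb
      exact menger_family_reverse P h1 h2
    · -- both extra
      exact mengerC hk i i' (fun hc => huv (congrArg Sum.inr hc))
  -- conclude
  apply le_antisymm
  · exact csSup_le ⟨0, menger_zero _⟩ (fun m hm => mol_upper hk hh hm)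
  · exact le_csSup ⟨k, fun m hm => mol_upper hk hh hm⟩ hmem

end Assembly


/-- for `k, h ≥ 1`, the `k`-molecule `ϑ_{B_k}^{Bs,h}` (which requires
`h ≥ k - k'` where `k'` is the connectivity of the base graph) has connectivity
exactly `k`. -/
theorem molecule_connectivity (k h : ℕ) (hk : 1 ≤ k) (hh : 1 ≤ h)
    (Bs : SimpleGraph (Fin k)) (hcond : k - connectivity Bs ≤ h) :
    connectivity (molecule k h Bs) = k := by
  exact molecule_connectivity' hk hh Bs hcond
end

section
/- If G is a finite k-connected graph with entanglement equal to k, then G is an abstract k-molecule: there exists a set B_k of k vertices such that (i) B_k is a vertex cover of G, (ii) every vertex outside B_k is adjacent to all vertices of B_k and to no vertex outside B_k, and (iii) |V(G) \ B_k| ≥ k − k' where k' is the connectivity of the induced subgraph G[B_k]. -/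
open SimpleGraph

/-! ### Auxiliary lemmas -/

set_option linter.unusedSectionVars false

section BasicGame
variable {V : Type*} [Fintype V] [DecidableEq V] {G : SimpleGraph V}

/-- With `|V|` cops, the cops always win: keep placing a cop on the thief. -/
lemma copswin_card : ∀ (n : ℕ) (C : Finset V) (v : V), Cᶜ.card ≤ n → v ∉ C →
    CopsWin G (Fintype.card V) v C := by
  intro n
  induction n with
  | zero =>
    intro C v h0 hv
    exact absurd (Finset.card_pos.2 ⟨v, Finset.mem_compl.2 hv⟩) (by omega)
  | succ n ih =>
    intro C v hc hv
    refine CopsWin.step (Or.inr (Or.inl rfl)) (Finset.card_le_univ _) ?_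
    intro w _ hw
    refine ih _ w ?_ hw
    have hvc : v ∈ Cᶜ := Finset.mem_compl.2 hv
    rw [Finset.compl_insert, Finset.card_erase_of_mem hvc]
    omega

lemma winset_nonempty : Set.Nonempty {k | ∀ v : V, CopsWin G k v ∅} :=
  ⟨Fintype.card V, fun v => copswin_card (Fintype.card V) ∅ v
    (by simp [Finset.card_le_univ]) (Finset.notMem_empty v)⟩

/-- With 0 cops, the cops win only from isolated vertices. -/
lemma zero_cops_edgeless {v : V} {C : Finset V} (h : CopsWin G 0 v C) :
    ∀ w, ¬ G.Adj v w := by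
  induction h with
  | @step v C C' hmove hcard hnext ih =>
    intro w hvw
    have hC' : C' = ∅ := Finset.card_eq_zero.1 (Nat.le_zero.1 hcard)
    exact ih w hvw (by simp [hC']) v hvw.symm

end BasicGame

section SecondVertex

/-- A walk whose support has no duplicates and whose endpoints coincide has length 0. -/
lemma loop_nodup_length {W : Type*} {H : SimpleGraph W} {x y : W} (w : H.Walk x y)
    (hxy : x = y) (hnd : w.support.Nodup) : w.length = 0 := by
  cases w with
  | nil => rfl
  | cons h w2 =>
    exfalso
    rw [SimpleGraph.Walk.support_cons] at hnd
    have hx : x ∉ w2.support := (List.nodup_cons.1 hnd).1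
    exact hx (hxy ▸ w2.end_mem_support)

/-- Two walks of length one between the same endpoints are equal. -/
lemma length_one_eq {W : Type*} {H : SimpleGraph W} {x y : W} (p q : H.Walk x y)
    (hp : p.length = 1) (hq : q.length = 1) : p = q := by
  cases p with
  | nil => simp at hp
  | cons h p' =>
    cases p' with
    | nil =>
      cases q with
      | nil => simp at hq
      | cons h2 q' =>
        cases q' with
        | nil => rfl
        | cons h3 q'' => simp [SimpleGraph.Walk.length_cons] at hq
    | cons h3 p'' => simp [SimpleGraph.Walk.length_cons] at hp

/-- From an injective internally-disjoint family of paths `u → v` we get an injective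
family of neighbors of `u` (the second vertices of the paths). -/
lemma second_vertex_inj {W : Type*} {H : SimpleGraph W} {u v : W} (hne : u ≠ v) {m : ℕ}
    (P : Fin m → H.Path u v)
    (hinj : Function.Injective P)
    (hdisj : ∀ i j, i ≠ j → ∀ x, x ∈ (P i).1.support → x ∈ (P j).1.support → x = u ∨ x = v) :
    ∃ s : Fin m → W, Function.Injective s ∧ ∀ i, H.Adj u (s i) := by
  classical
  have hex : ∀ i : Fin m, ∃ (w : W) (h : H.Adj u w) (p' : H.Walk w v),
      (P i).1 = SimpleGraph.Walk.cons h p' :=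
    fun i => SimpleGraph.Walk.exists_eq_cons_of_ne hne (P i).1
  choose s hadj p' hp using hex
  have hmem : ∀ i, s i ∈ (P i).1.support := by
    intro i
    rw [hp i, SimpleGraph.Walk.support_cons]
    exact List.mem_cons_of_mem _ (p' i).start_mem_support
  have hlen : ∀ i, s i = v → (P i).1.length = 1 := by
    intro i hv
    have hpath : (P i).1.IsPath := (P i).2
    rw [hp i] at hpath
    have h0 : (p' i).length = 0 :=
      loop_nodup_length (p' i) hv ((SimpleGraph.Walk.cons_isPath_iff _ _).1 hpath).1.support_nodup
    rw [hp i, SimpleGraph.Walk.length_cons, h0]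
  refine ⟨s, ?_, hadj⟩
  intro i j heq
  by_contra hne'
  have hmj : s i ∈ (P j).1.support := heq ▸ hmem j
  rcases hdisj i j hne' (s i) (hmem i) hmj with h1 | h2
  · exact H.irrefl (h1 ▸ hadj i)
  · have hli : (P i).1.length = 1 := hlen i h2
    have hlj : (P j).1.length = 1 := hlen j (heq ▸ h2)
    exact hne' (hinj (Subtype.ext (length_one_eq _ _ hli hlj)))

end SecondVertex

/-- Crossing lemma: a walk from a vertex not satisfying `Pd` to one satisfying it
contains an edge crossing the boundary. -/
lemma walk_crossing {W : Type*} {H : SimpleGraph W} (Pd : W → Prop) :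
    ∀ {p q : W} (w : H.Walk p q), ¬ Pd p → Pd q →
      ∃ x y, H.Adj x y ∧ x ∈ w.support ∧ ¬ Pd x ∧ Pd y := by
  intro p q w
  induction w with
  | nil => intro hp hq; exact absurd hq hp
  | @cons a b c h w' ih =>
    intro hp hq
    by_cases hb : Pd b
    · exact ⟨a, b, h, by simp [SimpleGraph.Walk.support_cons], hp, hb⟩
    · obtain ⟨x, y, hxy, hxs, hx, hy⟩ := ih hb hq
      exact ⟨x, y, hxy, by simp [SimpleGraph.Walk.support_cons, hxs], hx, hy⟩

section Sep
variable {V : Type*} [Fintype V] [DecidableEq V] {G : SimpleGraph V} {k : ℕ}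

/-- Separator lemma: if `C'` is a `k`-set, `w₀ ∉ C'` has all its neighbors in `C'`,
and there is an edge `a-b` avoiding `C'`, then every vertex `v ∈ C'` has a neighbor
outside `C'` which itself has a neighbor outside `C'`. -/
lemma separator_reach (hconn : MengerConnected k G) (C' : Finset V) (hC'k : C'.card = k)
    {w₀ : V} (hw₀ : ∀ z, G.Adj w₀ z → z ∈ C') (hw₀C : w₀ ∉ C')
    {a b : V} (hab : G.Adj a b) (ha : a ∉ C') (hb : b ∉ C')
    {v : V} (hv : v ∈ C') :
    ∃ w, G.Adj v w ∧ w ∉ C' ∧ ∃ z, G.Adj w z ∧ z ∉ C' := by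
  classical
  set Pd : V → Prop := fun x => ∃ W : G.Walk a x, ∀ c ∈ W.support, c ∉ C' with hPd
  have hPda : Pd a := ⟨SimpleGraph.Walk.nil, by simp [ha]⟩
  have hPdnot : ∀ x, Pd x → x ∉ C' := by
    rintro x ⟨W, hW⟩
    exact hW x W.end_mem_support
  have hPdstep : ∀ x y, Pd x → G.Adj x y → y ∉ C' → Pd y := by
    rintro x y ⟨W, hW⟩ hxy hy
    refine ⟨W.concat hxy, ?_⟩
    intro c hc
    rw [SimpleGraph.Walk.support_concat] at hc
    rw [List.mem_append] at hc
    rcases hc with h | h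
    · exact hW c h
    · rwa [List.mem_singleton.1 h]
  have hw₀a : w₀ ≠ a := by
    rintro rfl
    exact hb (hw₀ b hab)
  have hw₀Pd : ¬ Pd w₀ := by
    rintro ⟨W, hW⟩
    obtain ⟨c, hadj, W2, hWr⟩ := SimpleGraph.Walk.exists_eq_cons_of_ne hw₀a W.reverse
    have hcW : c ∈ W.support := by
      have : c ∈ W.reverse.support := by
        rw [hWr, SimpleGraph.Walk.support_cons]
        exact List.mem_cons_of_mem _ W2.start_mem_support
      rwa [SimpleGraph.Walk.support_reverse, List.mem_reverse] at this
    exact hW c hcW (hw₀ c hadj)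
  obtain ⟨P, hinj, hdisj⟩ := hconn w₀ a hw₀a
  have hcross : ∀ i : Fin k, ∃ x y, G.Adj x y ∧ x ∈ (P i).1.support ∧ ¬ Pd x ∧ Pd y :=
    fun i => walk_crossing Pd (P i).1 hw₀Pd hPda
  choose x y hxy hxs hx hy using hcross
  have hxC' : ∀ i, x i ∈ C' := by
    intro i
    by_contra hxc
    exact hx i (hPdstep _ _ (hy i) (hxy i).symm hxc)
  have hxinj : Function.Injective x := by
    intro i j heq
    by_contra hne'
    rcases hdisj i j hne' (x i) (hxs i) (heq ▸ hxs j) with h1 | h2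
    · exact hw₀C (h1 ▸ hxC' i)
    · exact hx i (h2 ▸ hPda)
  have hXsurj : ∀ c ∈ C', ∃ i, x i = c := by
    intro c hc
    let X : Fin k → {z // z ∈ C'} := fun i => ⟨x i, hxC' i⟩
    have hXinj : Function.Injective X := fun i j h => hxinj (congrArg Subtype.val h)
    have hbij : Function.Bijective X :=
      (Fintype.bijective_iff_injective_and_card X).2 ⟨hXinj, by simp [hC'k]⟩
    obtain ⟨i, hi⟩ := hbij.2 ⟨c, hc⟩
    exact ⟨i, congrArg Subtype.val hi⟩
  obtain ⟨i, hi⟩ := hXsurj v hv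
  refine ⟨y i, hi ▸ hxy i, hPdnot _ (hy i), ?_⟩
  obtain ⟨W, hW⟩ := hy i
  by_cases hya : y i = a
  · exact ⟨b, hya ▸ hab, hb⟩
  · obtain ⟨c, hadj, W2, hWr⟩ := SimpleGraph.Walk.exists_eq_cons_of_ne hya W.reverse
    have hcW : c ∈ W.support := by
      have : c ∈ W.reverse.support := by
        rw [hWr, SimpleGraph.Walk.support_cons]
        exact List.mem_cons_of_mem _ W2.start_mem_support
      rwa [SimpleGraph.Walk.support_reverse, List.mem_reverse] at this
    exact ⟨c, hadj, hW c hcW⟩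

/-- If the graph has no vertex cover of size at most `k`, the thief escapes `k` cops
forever, starting from any uncovered position with an uncovered neighbor. -/
lemma thief_survives
    (hesc : ∀ (v : V) (T : Finset V), T.card < k → ∃ w, G.Adj v w ∧ w ∉ T)
    (hnovc : ∀ S : Finset V, S.card ≤ k → ¬ _root_.IsVertexCover G S)
    (hsep : ∀ (C' : Finset V), C'.card = k →
      ∀ {w₀ : V}, (∀ z, G.Adj w₀ z → z ∈ C') → w₀ ∉ C' →
      ∀ {a b : V}, G.Adj a b → a ∉ C' → b ∉ C' →
      ∀ {v : V}, v ∈ C' →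
      ∃ w, G.Adj v w ∧ w ∉ C' ∧ ∃ z, G.Adj w z ∧ z ∉ C') :
    ∀ (v : V) (C : Finset V), CopsWin G k v C → v ∉ C →
      (∃ w, G.Adj v w ∧ w ∉ C) → False := by
  intro v C h
  induction h with
  | @step v C C' hmove hcard hnext ih =>
    intro hvC hΦ
    obtain ⟨w₁, hw₁, hw₁C⟩ := hΦ
    by_cases hvC' : v ∈ C'
    · -- cops placed a cop on the thief's vertex
      have hesc' : ∃ w, G.Adj v w ∧ w ∉ C' := by
        have hlt : (C'.erase v).card < k := by
          have h1 : (C'.erase v).card = C'.card - 1 := Finset.card_erase_of_mem hvC'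
          have h2 : 0 < C'.card := Finset.card_pos.2 ⟨v, hvC'⟩
          omega
        obtain ⟨w, hw, hwE⟩ := hesc v (C'.erase v) hlt
        refine ⟨w, hw, fun hmem => hwE (Finset.mem_erase.2 ⟨(G.ne_of_adj hw).symm, hmem⟩)⟩
      by_cases hgood : ∃ w, G.Adj v w ∧ w ∉ C' ∧ ∃ z, G.Adj w z ∧ z ∉ C'
      · obtain ⟨w, hvw, hwC', z, hz, hzC'⟩ := hgood
        exact ih w hvw hwC' hwC' ⟨z, hz, hzC'⟩
      · push_neg at hgood
        obtain ⟨w₀, hvw₀, hw₀C'⟩ := hesc'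
        have hNw₀ : ∀ z, G.Adj w₀ z → z ∈ C' := hgood w₀ hvw₀ hw₀C'
        have hC'k : C'.card = k := by
          refine le_antisymm hcard ?_
          by_contra hlt
          push_neg at hlt
          obtain ⟨z, hz, hzC'⟩ := hesc w₀ C' hlt
          exact hzC' (hNw₀ z hz)
        have hfree := hnovc C' hcard
        rw [_root_.IsVertexCover] at hfree
        push_neg at hfree
        obtain ⟨a, b, hab, haC', hbC'⟩ := hfree
        obtain ⟨w, hvw, hwC', z, hwz, hzC'⟩ := hsep C' hC'k hNw₀ hw₀C' hab haC' hbC' hvC'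
        exact ih w hvw hwC' hwC' ⟨z, hwz, hzC'⟩
    · -- cops did not move onto the thief: C' = C
      have hC' : C' = C := by
        rcases hmove with h | h | ⟨x, hx, h⟩
        · exact h
        · exact absurd (h ▸ Finset.mem_insert_self v C) hvC'
        · exact absurd (h ▸ Finset.mem_insert_self v _) hvC'
      exact ih w₁ hw₁ (hC' ▸ hw₁C) (hC' ▸ hw₁C) ⟨v, hw₁.symm, hC' ▸ hvC⟩

end Sep

section Lift
variable {V : Type*} {G : SimpleGraph V}

/-- Lift a walk whose support lies in `s` to the induced subgraph on `s`. -/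
def liftWalk (G : SimpleGraph V) (s : Set V) :
    ∀ {p q : V} (w : G.Walk p q) (hw : ∀ x ∈ w.support, x ∈ s),
      (G.induce s).Walk ⟨p, hw p w.start_mem_support⟩ ⟨q, hw q w.end_mem_support⟩
  | _, _, Walk.nil, _ => Walk.nil
  | _, _, Walk.cons h w', hw =>
      Walk.cons (by exact h)
        (liftWalk G s w' (fun x hx => hw x (by rw [Walk.support_cons]; exact List.mem_cons_of_mem _ hx)))

/-- The hom from the induced subgraph back to `G`. -/
def myInduceHom (G : SimpleGraph V) (s : Set V) : G.induce s →g G :=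
  ⟨Subtype.val, fun h => h⟩

lemma liftWalk_map (s : Set V) :
    ∀ {p q : V} (w : G.Walk p q) (hw : ∀ x ∈ w.support, x ∈ s),
      (liftWalk G s w hw).map (myInduceHom G s) = w := by
  intro p q w
  induction w with
  | nil => intro hw; simp [liftWalk, myInduceHom]
  | cons h w' ih =>
    intro hw
    simp only [liftWalk, Walk.map_cons]
    exact congrArg (Walk.cons h) (ih _)

lemma liftWalk_support_map (s : Set V) :
    ∀ {p q : V} (w : G.Walk p q) (hw : ∀ x ∈ w.support, x ∈ s),
      (liftWalk G s w hw).support.map Subtype.val = w.support := by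
  intro p q w
  induction w with
  | nil => intro hw; simp [liftWalk]
  | cons h w' ih =>
    intro hw
    simp only [liftWalk, Walk.support_cons, List.map_cons]
    exact congrArg (List.cons _) (ih _)

lemma liftWalk_isPath (s : Set V) {p q : V} (w : G.Walk p q)
    (hw : ∀ x ∈ w.support, x ∈ s) (hp : w.IsPath) : (liftWalk G s w hw).IsPath := by
  rw [Walk.isPath_def]
  apply List.Nodup.of_map Subtype.val
  rw [liftWalk_support_map]
  exact hp.support_nodup

lemma liftWalk_mem_support (s : Set V) {p q : V} (w : G.Walk p q)
    (hw : ∀ x ∈ w.support, x ∈ s) {x : s} (hx : x ∈ (liftWalk G s w hw).support) :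
    (x : V) ∈ w.support := by
  rw [← liftWalk_support_map s w hw]
  exact List.mem_map_of_mem hx

end Lift

section Transfer
variable {V : Type*} [Fintype V] [DecidableEq V] {G : SimpleGraph V} {k : ℕ}

/-- A `k`-connected graph restricted to `B` is at least `k - |Bᶜ|`-connected. -/
lemma menger_induce (hconn : MengerConnected k G) (B : Finset V) :
    MengerConnected (k - Bᶜ.card) (G.induce (B : Set V)) := by
  classical
  intro u' v' hne'
  have hne : (u' : V) ≠ (v' : V) := fun h => hne' (Subtype.ext h)
  obtain ⟨P, hinj, hdisj⟩ := hconn u'.1 v'.1 hne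
  set Bad : Finset (Fin k) :=
    Finset.univ.filter (fun i => ¬ ∀ x ∈ (P i).1.support, x ∈ (B : Set V)) with hBad
  have hwit : ∀ i ∈ Bad, ∃ x, x ∈ (P i).1.support ∧ x ∉ B := by
    intro i hi
    rw [hBad, Finset.mem_filter] at hi
    push_neg at hi
    obtain ⟨x, hx1, hx2⟩ := hi.2
    exact ⟨x, hx1, fun hc => hx2 (by simpa using hc)⟩
  choose o ho1 ho2 using hwit
  have hBadcard : Bad.card ≤ Bᶜ.card := by
    refine Finset.card_le_card_of_injOn (fun i => if h : i ∈ Bad then o i h else u'.1) ?_ ?_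
    · intro i hi
      simp only [Finset.mem_coe] at hi
      simp only [hi, dif_pos]
      exact Finset.mem_compl.2 (ho2 i hi)
    · intro i hi j hj heq
      simp only [Finset.mem_coe] at hi hj
      simp only [hi, hj, dif_pos] at heq
      by_contra hne''
      rcases hdisj i j hne'' (o i hi) (ho1 i hi) (heq ▸ ho1 j hj) with h | h
      · exact ho2 i hi (h ▸ (by simpa using u'.2))
      · exact ho2 i hi (h ▸ (by simpa using v'.2))
  have hGood : (Finset.univ \ Bad).card = k - Bad.card := by
    rw [Finset.card_sdiff_of_subset (Finset.subset_univ _)]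
    simp
  obtain ⟨T, hTsub, hTcard⟩ : ∃ T ⊆ Finset.univ \ Bad, T.card = k - Bᶜ.card := by
    apply Finset.exists_subset_card_eq
    rw [hGood]
    omega
  let e := Finset.equivFinOfCardEq hTcard
  have hgood : ∀ (j : Fin (k - Bᶜ.card)), ∀ x ∈ (P ((e.symm j).1)).1.support, x ∈ (B : Set V) := by
    intro j
    have := hTsub (e.symm j).2
    rw [Finset.mem_sdiff, hBad, Finset.mem_filter] at this
    have h2 := this.2
    push_neg at h2
    simpa using h2
  refine ⟨fun j => ⟨liftWalk G (B : Set V) (P ((e.symm j).1)).1 (hgood j),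
      liftWalk_isPath _ _ _ (P ((e.symm j).1)).2⟩, ?_, ?_⟩
  · intro j j' heq
    have heqw := congrArg (fun p => (Subtype.val p).map (myInduceHom G (B : Set V))) heq
    simp only [liftWalk_map] at heqw
    have : (e.symm j).1 = (e.symm j').1 := hinj (Subtype.ext heqw)
    exact e.symm.injective (Subtype.ext this)
  · intro i j hij x hxi hxj
    have h1 : (x : V) ∈ (P ((e.symm i).1)).1.support := liftWalk_mem_support _ _ _ hxi
    have h2 : (x : V) ∈ (P ((e.symm j).1)).1.support := liftWalk_mem_support _ _ _ hxj
    have hne'' : (e.symm i).1 ≠ (e.symm j).1 :=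
      fun h => hij (e.symm.injective (Subtype.ext h))
    rcases hdisj _ _ hne'' x h1 h2 with h | h
    · exact Or.inl (Subtype.ext h)
    · exact Or.inr (Subtype.ext h)

/-- In a `k`-connected graph with at least two vertices, every vertex has a neighbor
avoiding any set of fewer than `k` vertices. -/
lemma exists_escape (hconn : MengerConnected k G) (hV : 2 ≤ Fintype.card V)
    (v : V) (T : Finset V) (hT : T.card < k) : ∃ w, G.Adj v w ∧ w ∉ T := by
  classical
  obtain ⟨u, hu⟩ := Fintype.exists_ne_of_one_lt_card (by omega) v
  obtain ⟨P, hinj, hdisj⟩ := hconn v u (Ne.symm hu)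
  obtain ⟨s, hsinj, hsadj⟩ := second_vertex_inj (Ne.symm hu) P hinj hdisj
  by_contra hno
  push_neg at hno
  have hsub : ∀ i, s i ∈ T := fun i => hno (s i) (hsadj i)
  have : k ≤ T.card := by
    have h1 : Function.Injective (fun i : Fin k => (⟨s i, hsub i⟩ : {x // x ∈ T})) :=
      fun i j h => hsinj (congrArg Subtype.val h)
    calc k = Fintype.card (Fin k) := (Fintype.card_fin k).symm
    _ ≤ Fintype.card {x // x ∈ T} := Fintype.card_le_of_injective _ h1
    _ = T.card := Fintype.card_coe T
  omega

/-- In a `k`-connected graph with at least two vertices, `k < |V|`. -/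
lemma k_lt_card (hconn : MengerConnected k G) (hV : 2 ≤ Fintype.card V) :
    k < Fintype.card V := by
  classical
  by_contra hk
  push_neg at hk
  obtain ⟨v⟩ : Nonempty V := Fintype.card_pos_iff.1 (by omega)
  have hcard : (Finset.univ.erase v).card < k := by
    rw [Finset.card_erase_of_mem (Finset.mem_univ v), Finset.card_univ]
    omega
  obtain ⟨w, hw, hwE⟩ := exists_escape hconn hV v (Finset.univ.erase v) hcard
  exact hwE (Finset.mem_erase.2 ⟨(G.ne_of_adj hw).symm, Finset.mem_univ w⟩)

end Transfer

/-- a `k`-connected graph of entanglement `k` is an abstract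
`k`-molecule: there is a set `B` of `k` vertices which is a vertex cover, such that
every vertex outside `B` is adjacent to all of `B` and to no vertex outside `B`,
and the number of vertices outside `B` is at least `k - k'` where `k'` is the
connectivity of the subgraph induced by `B`. -/
theorem kConnected_entanglement_k_is_molecule
    {V : Type*} [Fintype V] [DecidableEq V] (k : ℕ) (G : SimpleGraph V)
    (hconn : MengerConnected k G) (hent : entanglement G = k) :
    ∃ B : Finset V, B.card = k ∧ _root_.IsVertexCover G B ∧
      (∀ v, v ∉ B → (∀ b ∈ B, G.Adj v b) ∧ (∀ w, w ∉ B → ¬ G.Adj v w)) ∧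
      k - connectivity (G.induce (B : Set V)) ≤ Bᶜ.card := by
  classical
  have hk : ∀ v : V, CopsWin G k v ∅ := by
    have h1 : sInf {m | ∀ v : V, CopsWin G m v ∅} ∈ {m | ∀ v : V, CopsWin G m v ∅} :=
      Nat.sInf_mem winset_nonempty
    rwa [show sInf {m | ∀ v : V, CopsWin G m v ∅} = entanglement G from rfl, hent] at h1
  rcases Nat.eq_zero_or_pos k with hk0 | hk1
  · -- k = 0 : the graph is edgeless
    subst hk0
    have hedge : ∀ v w : V, ¬ G.Adj v w := fun v w => zero_cops_edgeless (hk v) w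
    refine ⟨∅, Finset.card_empty, fun v w h => absurd h (hedge v w), ?_, ?_⟩
    · exact fun v _ => ⟨fun b hb => absurd hb (Finset.notMem_empty b),
        fun w _ => hedge v w⟩
    · simp
  · -- k ≥ 1
    have hV2 : 2 ≤ Fintype.card V := by
      by_contra hV
      push_neg at hV
      interval_cases h : Fintype.card V
      · have h0 : (0 : ℕ) ∈ {m | ∀ v : V, CopsWin G m v ∅} := by
          intro v
          exact absurd (Fintype.card_pos_iff.2 ⟨v⟩) (by omega)
        have := Nat.sInf_le h0
        rw [show sInf {m | ∀ v : V, CopsWin G m v ∅} = entanglement G from rfl, hent] at this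
        omega
      · have hsub : Subsingleton V := Fintype.card_le_one_iff_subsingleton.1 (by omega)
        have h0 : (0 : ℕ) ∈ {m | ∀ v : V, CopsWin G m v ∅} := by
          intro v
          refine CopsWin.step (Or.inl rfl) (by simp) ?_
          intro w hw _
          exact absurd (Subsingleton.elim v w) (G.ne_of_adj hw)
        have := Nat.sInf_le h0
        rw [show sInf {m | ∀ v : V, CopsWin G m v ∅} = entanglement G from rfl, hent] at this
        omega
    have hesc := exists_escape hconn hV2
    by_cases hvc : ∃ S : Finset V, S.card ≤ k ∧ _root_.IsVertexCover G S
    · -- extract the molecule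
      obtain ⟨S, hSk, hSvc⟩ := hvc
      have hkV := k_lt_card hconn hV2
      have hnb : ∀ v, v ∉ S → Finset.univ.filter (fun w => G.Adj v w) = S := by
        intro v hv
        have hsub : Finset.univ.filter (fun w => G.Adj v w) ⊆ S := by
          intro w hw
          rw [Finset.mem_filter] at hw
          exact (hSvc hw.2).resolve_left hv
        refine Finset.eq_of_subset_of_card_le hsub (le_trans hSk ?_)
        by_contra hlt
        push_neg at hlt
        obtain ⟨w, hw, hwn⟩ := hesc v _ hlt
        exact hwn (Finset.mem_filter.2 ⟨Finset.mem_univ w, hw⟩)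
      obtain ⟨u, hu⟩ : ∃ u, u ∉ S := by
        have : 0 < Sᶜ.card := by
          rw [Finset.card_compl]
          omega
        obtain ⟨u, hu⟩ := Finset.card_pos.1 this
        exact ⟨u, Finset.mem_compl.1 hu⟩
      have hScard : S.card = k := by
        refine le_antisymm hSk ?_
        rw [← hnb u hu]
        by_contra hlt
        push_neg at hlt
        obtain ⟨w, hw, hwn⟩ := hesc u _ hlt
        exact hwn (Finset.mem_filter.2 ⟨Finset.mem_univ w, hw⟩)
      have hmain : ∀ v, v ∉ S → (∀ b ∈ S, G.Adj v b) ∧ (∀ w, w ∉ S → ¬ G.Adj v w) := by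
        intro v hv
        constructor
        · intro b hb
          have : b ∈ Finset.univ.filter (fun w => G.Adj v w) := (hnb v hv) ▸ hb
          exact (Finset.mem_filter.1 this).2
        · intro w hw hadj
          exact hw ((hnb v hv) ▸ Finset.mem_filter.2 ⟨Finset.mem_univ w, hadj⟩)
      refine ⟨S, hScard, hSvc, hmain, ?_⟩
      rcases le_or_gt k Sᶜ.card with hcase | hcase
      · exact le_trans (Nat.sub_le _ _) hcase
      · have hu' : 0 < Sᶜ.card := Finset.card_pos.2 ⟨u, Finset.mem_compl.2 hu⟩
        have hub : BddAbove {m | MengerConnected m (G.induce (S : Set V))} := by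
          refine ⟨Fintype.card (S : Set V), ?_⟩
          intro m hm
          obtain ⟨a, ha, b, hb, hab⟩ := Finset.one_lt_card.1 (by omega : 1 < S.card)
          have hne : (⟨a, by simpa using ha⟩ : (S : Set V)) ≠ ⟨b, by simpa using hb⟩ :=
            fun h => hab (congrArg Subtype.val h)
          obtain ⟨P, hinj, hdisj⟩ := hm _ _ hne
          obtain ⟨s, hsinj, _⟩ := second_vertex_inj hne P hinj hdisj
          calc m = Fintype.card (Fin m) := (Fintype.card_fin m).symm
          _ ≤ Fintype.card (S : Set V) := Fintype.card_le_of_injective s hsinj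
        have hmem : (k - Sᶜ.card) ∈ {m | MengerConnected m (G.induce (S : Set V))} :=
          menger_induce hconn S
        have hle : k - Sᶜ.card ≤ connectivity (G.induce (S : Set V)) := le_csSup hub hmem
        omega
    · -- no vertex cover of size ≤ k : the thief survives, contradiction
      push_neg at hvc
      obtain ⟨v⟩ : Nonempty V := Fintype.card_pos_iff.1 (by omega)
      have hnb : ∃ w, G.Adj v w ∧ w ∉ (∅ : Finset V) := by
        obtain ⟨w, hw, _⟩ := hesc v ∅ (by simpa using hk1)
        exact ⟨w, hw, Finset.notMem_empty w⟩
      exact absurd (hk v) (fun h => thief_survives hesc hvc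
        (fun C' hC'k {w₀} hw₀ hw₀C {a b} hab ha hb {v'} hv' =>
          separator_reach hconn C' hC'k hw₀ hw₀C hab ha hb hv')
        v ∅ h (Finset.notMem_empty v) hnb)
end

section
/- The class of finite undirected graphs of entanglement at most n is closed under taking minors: if G is a minor of H, then Ent(G) ≤ Ent(H). -/
open SimpleGraph

/-- `G` is a minor of `H` (branch-set formulation, equivalent to being obtainable
by edge deletions, edge contractions and deletion of isolated vertices). -/
def IsMinor {U V : Type*} (G : SimpleGraph U) (H : SimpleGraph V) : Prop :=
  ∃ Br : U → Set V, (∀ u, (Br u).Nonempty) ∧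
    (Pairwise fun u u' => Disjoint (Br u) (Br u')) ∧
    (∀ u, (H.induce (Br u)).Connected) ∧
    ∀ u u', G.Adj u u' → ∃ x ∈ Br u, ∃ y ∈ Br u', H.Adj x y

/- ----------------------------------------------------------------------------
Auxiliary material for the proof.
---------------------------------------------------------------------------- -/

section Aux

variable {U V : Type*} [DecidableEq U] [DecidableEq V]

/-- With as many cops as vertices, the cops always win. -/
lemma copsWin_card [Fintype V] (H : SimpleGraph V) (C : Finset V) (v : V) (hv : v ∉ C) :
    CopsWin H (Fintype.card V) v C :=
  CopsWin.step (C' := insert v C) (Or.inr (Or.inl rfl)) (Finset.card_le_univ _)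
    (fun w _ hw => copsWin_card H (insert v C) w hw)
termination_by (Finset.univ \ C).card
decreasing_by
  apply Finset.card_lt_card
  rw [Finset.ssubset_def]
  refine ⟨Finset.sdiff_subset_sdiff (le_refl _) (Finset.subset_insert _ _), ?_⟩
  intro hsub
  have hvmem : v ∈ Finset.univ \ C := by simp [hv]
  have := hsub hvmem
  simp at this

/-- If the thief can escape from `(u, C)`, then for every legal cops' move `C'`
there is a thief move keeping the escape property. -/
lemma escape_step (G : SimpleGraph U) (k : ℕ) {u : U} {C : Finset U}
    (hP : ¬ CopsWin G k u C) (C' : Finset U)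
    (hmv : C' = C ∨ C' = insert u C ∨ ∃ x ∈ C, C' = insert u (C.erase x))
    (hcd : C'.card ≤ k) :
    ∃ w, G.Adj u w ∧ w ∉ C' ∧ ¬ CopsWin G k w C' := by
  by_contra h
  push_neg at h
  exact hP (CopsWin.step hmv hcd (fun w hw hw' => h w hw hw'))

lemma getLast_cons_eq {α : Type*} (x q : α) (l : List α) :
    (x :: q :: l).getLast (by simp) = (q :: l).getLast (by simp) :=
  List.getLast_cons (by simp)

lemma walk_getLast {K : SimpleGraph V} {a b : V} (p : K.Walk a b) (h : p.support ≠ []) :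
    p.support.getLast h = b := by
  simpa using p.getLast_support

variable (H : SimpleGraph V) (Br : U → Set V)

/-- Extract a simple path inside a branch set, in list form. -/
lemma path_exists (hconn : ∀ u, (H.induce (Br u)).Connected)
    (u : U) (x a : V) (hx : x ∈ Br u) (ha : a ∈ Br u) :
    ∃ l : List V, (∀ q ∈ l, q ∈ Br u) ∧ (x :: l).Nodup ∧
      (x :: l).Chain' H.Adj ∧ (x :: l).getLast (by simp) = a := by
  classical
  obtain ⟨W⟩ := (hconn u).preconnected ⟨x, hx⟩ ⟨a, ha⟩
  let f : H.induce (Br u) ↪g H := SimpleGraph.Embedding.induce (Br u)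
  let W2 : H.Walk x a := (W.toPath.val.map f.toHom)
  have hpath : W2.IsPath :=
    SimpleGraph.Walk.map_isPath_of_injective f.injective W.toPath.prop
  have hmem : ∀ q ∈ W2.support, q ∈ Br u := by
    intro q hq
    rw [show W2.support = W.toPath.val.support.map f.toHom from
      SimpleGraph.Walk.support_map _ _] at hq
    obtain ⟨⟨q', hq'⟩, _, rfl⟩ := List.mem_map.mp hq
    exact hq'
  have hcons : W2.support = x :: W2.support.tail := W2.support_eq_cons
  refine ⟨W2.support.tail, ?_, ?_, ?_, ?_⟩
  · intro q hq
    exact hmem q (by rw [hcons]; exact List.mem_cons_of_mem _ hq)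
  · rw [← hcons]; exact hpath.support_nodup
  · rw [← hcons]; exact W2.isChain_adj_support
  · have hne' : W2.support ≠ [] := by rw [hcons]; simp
    have h1 : W2.support.getLast? = some a := by
      rw [List.getLast?_eq_getLast hne', walk_getLast W2 hne']
    rw [hcons] at h1
    have h2 : (x :: W2.support.tail).getLast? =
        some ((x :: W2.support.tail).getLast (by simp)) :=
      List.getLast?_eq_getLast (by simp)
    rw [h1] at h2
    exact (Option.some.inj h2).symm

end Aux

section Main

variable {U V : Type*} [DecidableEq U] [DecidableEq V]
variable (G : SimpleGraph U) (H : SimpleGraph V) (k : ℕ) (Br : U → Set V)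

/-- Simulation states: positions `(x, D)` of the entanglement game on `H`
(thief on `x`, cops on `D`, cops to move) which are "linked" to a position of the
game on `G` from which the thief escapes.  Reaching such a state while the cops
play a winning strategy on `H` is absurd.

* `modeA`: round start; the thief on `G` sits on `u`, on `H` the thief just
  entered the (cop-free) branch set `Br u` at `x`.
* `modeB`: mid-walk, the `G`-move to `w` is committed (cops' `G`-answer put a cop
  on `u`); the thief walks along the remaining path `l` towards an exit adjacent
  to `b ∈ Br w`.
* `modeS`: mid-walk in the "saturated skip" case: all `k` cops are placed, one in
  each branch set of `C`, and the cops' `G`-answer was to skip; as soon as a cop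
  enters `Br u` a branch set of `C` is vacated and the `G`-move is re-chosen. -/
inductive Sim : V → Finset V → Prop
  | modeA (x : V) (D : Finset V) (u : U) (C : Finset U)
      (hx : x ∈ Br u)
      (hfree : ∀ y ∈ D, y ∉ Br u)
      (hcov : ∀ c, ∀ y ∈ D, y ∈ Br c → c ∈ C)
      (huC : u ∉ C)
      (hCk : C.card ≤ k)
      (hDk : D.card ≤ k)
      (hsub : ∀ y ∈ D, ∃ c, y ∈ Br c)
      (hP : ¬ CopsWin G k u C) : Sim x D
  | modeB (x : V) (D : Finset V) (u w : U) (C : Finset U) (l : List V) (b : V)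
      (hx : x ∈ Br u)
      (huC : u ∈ C)
      (hvw : u ≠ w)
      (hwC : w ∉ C)
      (hCk : C.card ≤ k)
      (hcov : ∀ c, ∀ y ∈ D, y ∈ Br c → c ∈ C)
      (hsub : ∀ y ∈ D, ∃ c, y ∈ Br c)
      (hlBr : ∀ q ∈ l, q ∈ Br u)
      (hnd : (x :: l).Nodup)
      (hch : (x :: l).Chain' H.Adj)
      (hlD : ∀ q ∈ l, q ∉ D)
      (hb : b ∈ Br w)
      (hlast : H.Adj ((x :: l).getLast (by simp)) b)
      (hP : ¬ CopsWin G k w C) : Sim x D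
  | modeS (x : V) (D : Finset V) (u w : U) (C : Finset U) (l : List V) (b : V)
      (hx : x ∈ Br u)
      (huC : u ∉ C)
      (hvw : u ≠ w)
      (hwC : w ∉ C)
      (hCk : C.card = k)
      (hDk : D.card = k)
      (hlive : ∀ c ∈ C, ∃ y ∈ D, y ∈ Br c)
      (hcov : ∀ c, ∀ y ∈ D, y ∈ Br c → c ∈ C)
      (hfree : ∀ y ∈ D, y ∉ Br u)
      (hsub : ∀ y ∈ D, ∃ c, y ∈ Br c)
      (hlBr : ∀ q ∈ l, q ∈ Br u)
      (hnd : (x :: l).Nodup)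
      (hch : (x :: l).Chain' H.Adj)
      (hb : b ∈ Br w)
      (hlast : H.Adj ((x :: l).getLast (by simp)) b)
      (hPu : ¬ CopsWin G k u C)
      (hPw : ¬ CopsWin G k w C) : Sim x D

/-- Different branch sets are disjoint. -/
lemma br_eq (hdisj : Pairwise fun u u' => Disjoint (Br u) (Br u'))
    {y : V} {c c' : U} (h1 : y ∈ Br c) (h2 : y ∈ Br c') : c = c' := by
  by_contra hne'
  exact Set.disjoint_left.mp (hdisj hne') h1 h2

/-- An injective choice of cop witnesses, one per branch set. -/
lemma card_wit (hne : ∀ u, (Br u).Nonempty)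
    (hdisj : Pairwise fun u u' => Disjoint (Br u) (Br u'))
    (S : Finset U) (E : Finset V) (h : ∀ c ∈ S, ∃ y ∈ E, y ∈ Br c) :
    S.card ≤ E.card := by
  classical
  have hex : ∀ c : U, ∃ y, c ∈ S → (y ∈ E ∧ y ∈ Br c) := by
    intro c
    by_cases hc : c ∈ S
    · obtain ⟨y, hy1, hy2⟩ := h c hc
      exact ⟨y, fun _ => ⟨hy1, hy2⟩⟩
    · exact ⟨(hne c).choose, fun hc' => absurd hc' hc⟩
  choose f hf using hex
  refine Finset.card_le_card_of_injOn f (fun c hc => (hf c hc).1) ?_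
  intro c hc c' hc' heq
  exact br_eq Br hdisj ((hf c (by simpa using hc)).2) (heq ▸ (hf c' (by simpa using hc')).2)

variable (hne : ∀ u, (Br u).Nonempty)
  (hdisj : Pairwise fun u u' => Disjoint (Br u) (Br u'))
  (hconn : ∀ u, (H.induce (Br u)).Connected)
  (hadj : ∀ u u', G.Adj u u' → ∃ x ∈ Br u, ∃ y ∈ Br u', H.Adj x y)

include hne hdisj hconn hadj in
/-- Main simulation lemma: a winning cops' position on `H` cannot be linked to an
escaping thief position on `G`. -/
lemma sim_absurd : ∀ {x : V} {D : Finset V},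
    CopsWin H k x D → Sim G H k Br x D → False := by
  intro x D hwin
  induction hwin with
  | @step x D D' hmove hcard hnext IH =>
    intro hsim
    -- generic facts about the cops' move on H
    have hsubD' : D' ⊆ insert x D := by
      rcases hmove with rfl | rfl | ⟨y, hy, rfl⟩
      · exact Finset.subset_insert _ _
      · exact Finset.Subset.refl _
      · exact Finset.insert_subset_insert _ (Finset.erase_subset _ _)
    cases hsim with
    | modeA u C hx hfree hcov huC hCk hDk hsub hP =>
      classical
      -- cops in `D'` stay out of `Br u` except possibly at `x`
      have hD'u : ∀ z ∈ D', z ∈ Br u → z = x := by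
        intro z hz hzu
        rcases Finset.mem_insert.mp (hsubD' hz) with rfl | hzD
        · rfl
        · exact absurd hzu (hfree z hzD)
      -- a cop of `D'` in `Br c`, `c ≠ u`, was already there
      have hD'old : ∀ c, c ≠ u → ∀ z ∈ D', z ∈ Br c → z ∈ D := by
        intro c hc z hz hzc
        rcases Finset.mem_insert.mp (hsubD' hz) with rfl | hzD
        · exact absurd (br_eq Br hdisj hzc hx) hc
        · exact hzD
      have hcov' : ∀ c, ∀ z ∈ D', z ∈ Br c → c ∈ insert u C := by
        intro c z hz hzc
        by_cases hc : c = u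
        · simp [hc]
        · exact Finset.mem_insert_of_mem (hcov c z (hD'old c hc z hz hzc) hzc)
      have hsub' : ∀ z ∈ D', ∃ c, z ∈ Br c := by
        intro z hz
        rcases Finset.mem_insert.mp (hsubD' hz) with rfl | hzD
        · exact ⟨u, hx⟩
        · exact hsub z hzD
      by_cases hstale : ∃ c₀ ∈ C, ∀ z ∈ D', z ∉ Br c₀
      case pos =>
        -- committed mode, move a stale cop onto u
        obtain ⟨c₀, hc₀C, hc₀⟩ := hstale
        set C' : Finset U := insert u (C.erase c₀) with hC'
        have hmvG : C' = C ∨ C' = insert u C ∨ ∃ x ∈ C, C' = insert u (C.erase x) :=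
          Or.inr (Or.inr ⟨c₀, hc₀C, rfl⟩)
        have hcdG : C'.card ≤ k := by
          have h1 : C'.card ≤ (C.erase c₀).card + 1 := Finset.card_insert_le _ _
          have h2 : (C.erase c₀).card = C.card - 1 := Finset.card_erase_of_mem hc₀C
          have h3 : 1 ≤ C.card := Finset.card_pos.mpr ⟨c₀, hc₀C⟩
          omega
        have huC' : u ∈ C' := Finset.mem_insert_self _ _
        have hcovC' : ∀ c, ∀ z ∈ D', z ∈ Br c → c ∈ C' := by
          intro c z hz hzc
          by_cases hc : c = u
          · simp [hC', hc]
          · have hcC : c ∈ C := hcov c z (hD'old c hc z hz hzc) hzc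
            have hcc₀ : c ≠ c₀ := by
              rintro rfl; exact hc₀ z hz hzc
            exact Finset.mem_insert_of_mem (Finset.mem_erase.mpr ⟨hcc₀, hcC⟩)
        obtain ⟨w, hGw, hwC', hPw⟩ := escape_step G k hP C' hmvG hcdG
        obtain ⟨a, ha, b, hb, hab⟩ := hadj u w hGw
        obtain ⟨l, hlBr, hnd, hch, hlast⟩ := path_exists H Br hconn u x a hx ha
        have hfw : ∀ z ∈ D', z ∉ Br w := fun z hz hzw => hwC' (hcovC' w z hz hzw)
        cases l with
        | nil =>
          have hxa : x = a := by simpa using hlast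
          subst hxa
          exact IH b hab (fun hb' => hfw b hb' hb)
            (Sim.modeA b D' w C' hb hfw hcovC' hwC' hcdG hcard hsub' hPw)
        | cons q l' =>
          have hq : q ∈ Br u := hlBr q (by simp)
          have hqx : q ≠ x := by
            rintro rfl; exact (List.nodup_cons.mp hnd).1 List.mem_cons_self
          have hqD' : q ∉ D' := fun hq' => hqx (hD'u q hq' hq)
          have hchx : H.Adj x q := (List.isChain_cons_cons.mp hch).1
          refine IH q hchx hqD' (Sim.modeB q D' u w C' l' b hq huC' hGw.ne hwC' hcdG
            hcovC' hsub' (fun r hr => hlBr r (by simp [hr])) (List.Nodup.of_cons hnd)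
            (List.isChain_cons_cons.mp hch).2 ?_ hb ?_ hPw)
          · intro r hr
            have hrBr : r ∈ Br u := hlBr r (by simp [hr])
            have hrx : r ≠ x := by
              rintro rfl
              exact (List.nodup_cons.mp hnd).1 (List.mem_cons_of_mem _ hr)
            exact fun hr' => hrx (hD'u r hr' hrBr)
          · rw [← getLast_cons_eq x q l', hlast]
            exact hab
      case neg =>
        push_neg at hstale
        have hlive' : ∀ c ∈ C, ∃ z ∈ D', z ∈ Br c := hstale
        by_cases hgrow : (∃ z ∈ D', z ∈ Br u) ∨ C.card < k
        case pos =>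
          -- committed mode, put a new cop on u
          set C' : Finset U := insert u C with hC'
          have hmvG : C' = C ∨ C' = insert u C ∨ ∃ x ∈ C, C' = insert u (C.erase x) :=
            Or.inr (Or.inl rfl)
          have hcdG : C'.card ≤ k := by
            rw [hC', Finset.card_insert_of_notMem huC]
            rcases hgrow with ⟨z, hz, hzu⟩ | hlt
            · -- count: witnesses of C avoid z
              have : C.card ≤ (D'.erase z).card := by
                refine card_wit Br hne hdisj C (D'.erase z) ?_
                intro c hc
                obtain ⟨y, hy, hyc⟩ := hlive' c hc
                refine ⟨y, Finset.mem_erase.mpr ⟨?_, hy⟩, hyc⟩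
                rintro rfl
                exact (by rintro rfl; exact huC hc : c ≠ u) (br_eq Br hdisj hyc hzu)
              have hzlt : (D'.erase z).card < D'.card := Finset.card_erase_lt_of_mem hz
              omega
            · omega
          have huC' : u ∈ C' := Finset.mem_insert_self _ _
          have hcovC' : ∀ c, ∀ z ∈ D', z ∈ Br c → c ∈ C' := hcov'
          obtain ⟨w, hGw, hwC', hPw⟩ := escape_step G k hP C' hmvG hcdG
          obtain ⟨a, ha, b, hb, hab⟩ := hadj u w hGw
          obtain ⟨l, hlBr, hnd, hch, hlast⟩ := path_exists H Br hconn u x a hx ha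
          have hfw : ∀ z ∈ D', z ∉ Br w := fun z hz hzw => hwC' (hcovC' w z hz hzw)
          cases l with
          | nil =>
            have hxa : x = a := by simpa using hlast
            subst hxa
            exact IH b hab (fun hb' => hfw b hb' hb)
              (Sim.modeA b D' w C' hb hfw hcovC' hwC' hcdG hcard hsub' hPw)
          | cons q l' =>
            have hq : q ∈ Br u := hlBr q (by simp)
            have hqx : q ≠ x := by
              intro h; rw [h] at hnd; simp at hnd
            have hqD' : q ∉ D' := fun hq' => hqx (hD'u q hq' hq)
            have hchx : H.Adj x q := (List.isChain_cons_cons.mp hch).1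
            refine IH q hchx hqD' (Sim.modeB q D' u w C' l' b hq huC' hGw.ne hwC' hcdG
              hcovC' hsub' (fun r hr => hlBr r (by simp [hr])) (List.Nodup.of_cons hnd)
              (List.isChain_cons_cons.mp hch).2 ?_ hb ?_ hPw)
            · intro r hr
              have hrBr : r ∈ Br u := hlBr r (by simp [hr])
              have hrx : r ≠ x := by
                rintro rfl
                exact (List.nodup_cons.mp hnd).1 (List.mem_cons_of_mem _ hr)
              exact fun hr' => hrx (hD'u r hr' hrBr)
            · rw [← getLast_cons_eq x q l', hlast]
              exact hab
        case neg =>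
          -- saturated skip mode
          push_neg at hgrow
          obtain ⟨hnogrow, hfull⟩ := hgrow
          have hCk' : C.card = k := le_antisymm hCk hfull
          -- the cops' move was a skip
          have hD'D : D' = D := by
            rcases hmove with rfl | rfl | ⟨y, hy, rfl⟩
            · rfl
            · exact absurd hx (hnogrow x (Finset.mem_insert_self _ _))
            · exact absurd hx (hnogrow x (Finset.mem_insert_self _ _))
          subst hD'D
          have hDk' : D'.card = k := by
            have h1 : C.card ≤ D'.card := card_wit Br hne hdisj C D' hlive'
            omega
          obtain ⟨w, hGw, hwC, hPw⟩ := escape_step G k hP C (Or.inl rfl) hCk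
          obtain ⟨a, ha, b, hb, hab⟩ := hadj u w hGw
          obtain ⟨l, hlBr, hnd, hch, hlast⟩ := path_exists H Br hconn u x a hx ha
          have hfw : ∀ z ∈ D', z ∉ Br w := fun z hz hzw => hwC (hcov w z hz hzw)
          cases l with
          | nil =>
            have hxa : x = a := by simpa using hlast
            subst hxa
            exact IH b hab (fun hb' => hfw b hb' hb)
              (Sim.modeA b D' w C hb hfw hcov hwC hCk hcard hsub hPw)
          | cons q l' =>
            have hq : q ∈ Br u := hlBr q (by simp)
            have hqD' : q ∉ D' := fun hq' => hfree q hq' hq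
            have hchx : H.Adj x q := (List.isChain_cons_cons.mp hch).1
            refine IH q hchx hqD' (Sim.modeS q D' u w C l' b hq huC hGw.ne hwC hCk' hDk'
              hlive' hcov hfree hsub (fun r hr => hlBr r (by simp [hr]))
              (List.Nodup.of_cons hnd) (List.isChain_cons_cons.mp hch).2 hb ?_ hP hPw)
            rw [← getLast_cons_eq x q l', hlast]
            exact hab
    | modeB u w C l b hx huC hvw hwC hCk hcov hsub hlBr hnd hch hlD hb hlast hP =>
      classical
      have hcov' : ∀ c, ∀ z ∈ D', z ∈ Br c → c ∈ C := by
        intro c z hz hzc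
        rcases Finset.mem_insert.mp (hsubD' hz) with rfl | hzD
        · exact (br_eq Br hdisj hzc hx) ▸ huC
        · exact hcov c z hzD hzc
      have hsub' : ∀ z ∈ D', ∃ c, z ∈ Br c := by
        intro z hz
        rcases Finset.mem_insert.mp (hsubD' hz) with rfl | hzD
        · exact ⟨u, hx⟩
        · exact hsub z hzD
      have hfw : ∀ z ∈ D', z ∉ Br w := fun z hz hzw => hwC (hcov' w z hz hzw)
      cases l with
      | nil =>
        have hxb : H.Adj x b := by simpa using hlast
        exact IH b hxb (fun hb' => hfw b hb' hb)
          (Sim.modeA b D' w C hb hfw hcov' hwC hCk hcard hsub' hP)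
      | cons q l' =>
        have hq : q ∈ Br u := hlBr q (by simp)
        have hqx : q ≠ x := by
          rintro rfl; exact (List.nodup_cons.mp hnd).1 List.mem_cons_self
        have hqD' : q ∉ D' := by
          intro hq'
          rcases Finset.mem_insert.mp (hsubD' hq') with h | h
          · exact hqx h
          · exact hlD q (by simp) h
        have hchx : H.Adj x q := (List.isChain_cons_cons.mp hch).1
        refine IH q hchx hqD' (Sim.modeB q D' u w C l' b hq huC hvw hwC hCk
          hcov' hsub' (fun r hr => hlBr r (by simp [hr])) (List.Nodup.of_cons hnd)
          (List.isChain_cons_cons.mp hch).2 ?_ hb ?_ hP)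
        · intro r hr hr'
          rcases Finset.mem_insert.mp (hsubD' hr') with h | h
          · subst h
            exact (List.nodup_cons.mp hnd).1 (List.mem_cons_of_mem _ hr)
          · exact hlD r (by simp [hr]) h
        · rw [← getLast_cons_eq x q l']
          exact hlast
    | modeS u w C l b hx huC hvw hwC hCk hDk hlive hcov hfree hsub hlBr hnd hch hb
        hlast hPu hPw =>
      classical
      by_cases htrig : ∃ z ∈ D', z ∈ Br u
      case neg =>
        -- no cop entered `Br u`: the move was a skip, continue the walk
        push_neg at htrig
        have hD'D : D' = D := by
          rcases hmove with rfl | rfl | ⟨y, hy, rfl⟩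
          · rfl
          · exact absurd hx (htrig x (Finset.mem_insert_self _ _))
          · exact absurd hx (htrig x (Finset.mem_insert_self _ _))
        subst hD'D
        have hfw : ∀ z ∈ D', z ∉ Br w := fun z hz hzw => hwC (hcov w z hz hzw)
        cases l with
        | nil =>
          have hxb : H.Adj x b := by simpa using hlast
          exact IH b hxb (fun hb' => hfw b hb' hb)
            (Sim.modeA b D' w C hb hfw hcov hwC (le_of_eq hCk) (le_of_eq hDk) hsub hPw)
        | cons q l' =>
          have hq : q ∈ Br u := hlBr q (by simp)
          have hqD' : q ∉ D' := fun hq' => hfree q hq' hq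
          have hchx : H.Adj x q := (List.isChain_cons_cons.mp hch).1
          refine IH q hchx hqD' (Sim.modeS q D' u w C l' b hq huC hvw hwC hCk hDk
            hlive hcov hfree hsub (fun r hr => hlBr r (by simp [hr]))
            (List.Nodup.of_cons hnd) (List.isChain_cons_cons.mp hch).2 hb ?_ hPu hPw)
          rw [← getLast_cons_eq x q l']
          exact hlast
      case pos =>
        -- trigger: a cop was moved from some branch set `Br c₂` onto `x`
        have hxD : x ∉ D := fun h => hfree x h hx
        obtain ⟨y, hyD, hD'⟩ : ∃ y ∈ D, D' = insert x (D.erase y) := by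
          rcases hmove with rfl | rfl | ⟨y, hy, rfl⟩
          · obtain ⟨z, hz, hzu⟩ := htrig
            exact absurd hzu (hfree z hz)
          · exfalso
            have hc : (insert x D).card = D.card + 1 := Finset.card_insert_of_notMem hxD
            rw [hc, hDk] at hcard
            omega
          · exact ⟨y, hy, rfl⟩
        subst hD'
        obtain ⟨c₂, hyc₂⟩ := hsub y hyD
        have hc₂C : c₂ ∈ C := hcov c₂ y hyD hyc₂
        have hc₂u : c₂ ≠ u := by
          rintro rfl; exact hfree y hyD hyc₂
        -- `y` is the unique cop in `Br c₂`
        have huniq : ∀ y' ∈ D, y' ∈ Br c₂ → y' = y := by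
          intro y' hy'D hy'c₂
          by_contra hyy
          have : C.card ≤ (D.erase y').card := by
            refine card_wit Br hne hdisj C (D.erase y') ?_
            intro c hc
            by_cases hcc₂ : c = c₂
            · subst hcc₂
              exact ⟨y, Finset.mem_erase.mpr ⟨fun h => hyy h.symm, hyD⟩, hyc₂⟩
            · obtain ⟨z, hzD, hzc⟩ := hlive c hc
              refine ⟨z, Finset.mem_erase.mpr ⟨?_, hzD⟩, hzc⟩
              rintro rfl
              exact hcc₂ (br_eq Br hdisj hzc hy'c₂)
          rw [Finset.card_erase_of_mem hy'D, hDk, hCk] at this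
          have hk1 : 1 ≤ k := by
            rw [← hDk]; exact Finset.card_pos.mpr ⟨y, hyD⟩
          omega
        -- structure of the new cop set
        have hD'u : ∀ z ∈ insert x (D.erase y), z ∈ Br u → z = x := by
          intro z hz hzu
          rcases Finset.mem_insert.mp hz with rfl | hzD
          · rfl
          · exact absurd hzu (hfree z (Finset.erase_subset _ _ hzD))
        have hD'c₂ : ∀ z ∈ insert x (D.erase y), z ∉ Br c₂ := by
          intro z hz hzc₂
          rcases Finset.mem_insert.mp hz with rfl | hzD
          · exact hc₂u (br_eq Br hdisj hzc₂ hx)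
          · have := huniq z (Finset.erase_subset _ _ hzD) hzc₂
            exact (Finset.mem_erase.mp hzD).1 this
        -- the revised G-move: move the cop from c₂ onto u
        set C' : Finset U := insert u (C.erase c₂) with hC'
        have hmvG : C' = C ∨ C' = insert u C ∨ ∃ x ∈ C, C' = insert u (C.erase x) :=
          Or.inr (Or.inr ⟨c₂, hc₂C, rfl⟩)
        have hcdG : C'.card ≤ k := by
          have h1 : C'.card ≤ (C.erase c₂).card + 1 := Finset.card_insert_le _ _
          have h2 : (C.erase c₂).card = C.card - 1 := Finset.card_erase_of_mem hc₂C
          have h3 : 1 ≤ C.card := Finset.card_pos.mpr ⟨c₂, hc₂C⟩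
          omega
        have huC' : u ∈ C' := Finset.mem_insert_self _ _
        have hcovC' : ∀ c, ∀ z ∈ insert x (D.erase y), z ∈ Br c → c ∈ C' := by
          intro c z hz hzc
          by_cases hc : c = u
          · simp [hC', hc]
          · rcases Finset.mem_insert.mp hz with rfl | hzD
            · exact absurd (br_eq Br hdisj hzc hx) hc
            · have hcC : c ∈ C := hcov c z (Finset.erase_subset _ _ hzD) hzc
              have hcc₂ : c ≠ c₂ := by
                rintro rfl
                exact hD'c₂ z hz hzc
              exact Finset.mem_insert_of_mem (Finset.mem_erase.mpr ⟨hcc₂, hcC⟩)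
        have hsub'' : ∀ z ∈ insert x (D.erase y), ∃ c, z ∈ Br c := by
          intro z hz
          rcases Finset.mem_insert.mp hz with rfl | hzD
          · exact ⟨u, hx⟩
          · exact hsub z (Finset.erase_subset _ _ hzD)
        obtain ⟨w', hGw', hw'C', hPw'⟩ := escape_step G k hPu C' hmvG hcdG
        obtain ⟨a', ha', b', hb', hab'⟩ := hadj u w' hGw'
        obtain ⟨l2, hlBr2, hnd2, hch2, hlast2⟩ := path_exists H Br hconn u x a' hx ha'
        have hfw' : ∀ z ∈ insert x (D.erase y), z ∉ Br w' :=
          fun z hz hzw => hw'C' (hcovC' w' z hz hzw)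
        cases l2 with
        | nil =>
          have hxa : x = a' := by simpa using hlast2
          subst hxa
          exact IH b' hab' (fun hb'' => hfw' b' hb'' hb')
            (Sim.modeA b' _ w' C' hb' hfw' hcovC' hw'C' hcdG hcard hsub'' hPw')
        | cons q l' =>
          have hq : q ∈ Br u := hlBr2 q (by simp)
          have hqx : q ≠ x := by
            rintro rfl; exact (List.nodup_cons.mp hnd2).1 List.mem_cons_self
          have hqD' : q ∉ insert x (D.erase y) := fun hq' => hqx (hD'u q hq' hq)
          have hchx : H.Adj x q := (List.isChain_cons_cons.mp hch2).1
          refine IH q hchx hqD' (Sim.modeB q _ u w' C' l' b' hq huC' hGw'.ne hw'C' hcdG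
            hcovC' hsub'' (fun r hr => hlBr2 r (by simp [hr])) (List.Nodup.of_cons hnd2)
            (List.isChain_cons_cons.mp hch2).2 ?_ hb' ?_ hPw')
          · intro r hr
            have hrBr : r ∈ Br u := hlBr2 r (by simp [hr])
            have hrx : r ≠ x := by
              rintro rfl
              exact (List.nodup_cons.mp hnd2).1 (List.mem_cons_of_mem _ hr)
            exact fun hr' => hrx (hD'u r hr' hrBr)
          · rw [← getLast_cons_eq x q l', hlast2]
            exact hab'

end Main

/-- graphs of entanglement at most `n` are closed under minors:
if `G` is a minor of `H` then `Ent(G) ≤ Ent(H)`. -/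
theorem entanglement_minor_monotone {U V : Type*}
    [Fintype U] [DecidableEq U] [Fintype V] [DecidableEq V]
    (G : SimpleGraph U) (H : SimpleGraph V) (hm : IsMinor G H) :
    entanglement G ≤ entanglement H := by
  classical
  obtain ⟨Br, hne, hdisj, hconn, hadj⟩ := hm
  have hmemH : (∀ v : V, CopsWin H (entanglement H) v ∅) := by
    have : entanglement H ∈ {k | ∀ v : V, CopsWin H k v ∅} := by
      apply Nat.sInf_mem
      exact ⟨Fintype.card V, fun v => copsWin_card H ∅ v (Finset.notMem_empty _)⟩
    exact this
  have hG : ∀ u : U, CopsWin G (entanglement H) u ∅ := by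
    intro u
    by_contra hP
    obtain ⟨x₀, hx₀⟩ := hne u
    exact sim_absurd G H (entanglement H) Br hne hdisj hconn hadj (hmemH x₀)
      (Sim.modeA x₀ ∅ u ∅ hx₀ (by simp) (by simp) (by simp) (by simp) (by simp)
        (by simp) hP)
  exact Nat.sInf_le hG
end
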